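/- arXiv:2511.17503 — 7 statements merged into one kernel-verified Lean document; each statement's English description precedes it below -/
import Mathlib

section
/- Let C be a k-dimensional subspace of F_{q^2}^n that is Hermitian self-orthogonal (C ⊆ C^{⊥_h}) with n > 2k+1, where the Hermitian inner product is ⟨α,β⟩_h = Σ a_i^q b_i. Then there exists a (k+1)-dimensional Hermitian self-orthogonal subspace C' of F_{q^2}^n with C ⊆ C'. -/
/-- Norm surjectivity onto the subfield: in a field with `q^2` elements,
every nonzero `s` with `s^q = s` is a `(q+1)`-st power. -/
lemma herm_norm_surj (q : ℕ) (hq2 : 2 ≤ q) (K : Type) [Field K] [Fintype K]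
    (hK : Fintype.card K = q ^ 2) (s : K) (hs : s ≠ 0) (hfix : s ^ q = s) :
    ∃ t : K, t ^ (q + 1) = s := by
  have hqq : q ^ 2 = q * q := sq q
  obtain ⟨g, hg⟩ := IsCyclic.exists_generator (α := Kˣ)
  haveI : DecidableEq K := Classical.decEq K
  have horder : orderOf g = q ^ 2 - 1 := by
    rw [orderOf_eq_card_of_forall_mem_zpowers hg, Nat.card_eq_fintype_card,
      Fintype.card_units, hK]
  set s' : Kˣ := Units.mk0 s hs with hs'
  obtain ⟨m, hm⟩ := (mem_powers_iff_mem_zpowers).2 (hg s')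
  have hm' : g ^ m = s' := hm
  have hfix' : s' ^ (q - 1) = 1 := by
    have h1 : s * s ^ (q - 1) = s * 1 := by
      rw [mul_one, ← pow_succ']
      have : q - 1 + 1 = q := by omega
      rw [this, hfix]
    have h2 : s ^ (q - 1) = 1 := mul_left_cancel₀ hs h1
    ext
    push_cast
    exact h2
  have hdvd : (q ^ 2 - 1) ∣ m * (q - 1) := by
    rw [← horder]
    exact orderOf_dvd_of_pow_eq_one (by rw [pow_mul, hm', hfix'])
  have hfact : q ^ 2 - 1 = (q + 1) * (q - 1) := by
    have h : (q + 1) * (q - 1) = q * q - 1 := by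
      cases q with
      | zero => omega
      | succ m => simp [Nat.succ_sub_one]; ring_nf; omega
    omega
  have hdvd2 : (q + 1) ∣ m := by
    rw [hfact] at hdvd
    have hq1 : 0 < q - 1 := by omega
    exact (Nat.mul_dvd_mul_iff_right hq1).1 hdvd
  obtain ⟨r, hr⟩ := hdvd2
  refine ⟨(g : K) ^ r, ?_⟩
  have hgr : (g ^ (r * (q + 1)) : Kˣ) = s' := by rw [Nat.mul_comm, ← hr, hm']
  calc ((g : K) ^ r) ^ (q + 1) = ((g ^ (r * (q+1)) : Kˣ) : K) := by push_cast [pow_mul]; ring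
    _ = s := by rw [hgr, hs', Units.val_mk0]

/-- a k-dimensional Hermitian self-orthogonal subspace of F_{q^2}^n with
n > 2k+1 extends to a (k+1)-dimensional Hermitian self-orthogonal subspace. -/
theorem stmt3 (q : ℕ) (hq : ∃ p e : ℕ, p.Prime ∧ 0 < e ∧ q = p ^ e)
    (K : Type) [Field K] [Fintype K] (hK : Fintype.card K = q ^ 2)
    (n k : ℕ) (hn : n > 2 * k + 1)
    (C : Submodule K (Fin n → K)) (hdim : Module.finrank K C = k)
    (hso : ∀ x ∈ C, ∀ y ∈ C, ∑ i, (x i) ^ q * y i = 0) :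
    ∃ C' : Submodule K (Fin n → K), C ≤ C' ∧ Module.finrank K C' = k + 1 ∧
      ∀ x ∈ C', ∀ y ∈ C', ∑ i, (x i) ^ q * y i = 0 := by
  obtain ⟨p, e, hp, he, rfl⟩ := hq
  haveI : Fact p.Prime := ⟨hp⟩
  set q := p ^ e with hqdef
  have hq2 : 2 ≤ q := Nat.one_lt_pow (by omega) hp.two_le
  -- characteristic
  have hpchar : p = ringChar K := by
    haveI := ringChar.charP K
    obtain ⟨m, hrp, hcard⟩ := FiniteField.card K (ringChar K)
    have hdvd : p ∣ ringChar K ^ (m : ℕ) := by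
      rw [← hcard, hK, hqdef, ← pow_mul]
      exact dvd_pow_self p (by positivity)
    exact (Nat.prime_dvd_prime_iff_eq hp hrp).1 (hp.dvd_of_dvd_pow hdvd)
  haveI hchar : CharP K p := by rw [hpchar]; exact ringChar.charP K
  haveI : ExpChar K p := ExpChar.prime hp
  -- Frobenius facts
  have hfrob_add : ∀ a b : K, (a + b) ^ q = a ^ q + b ^ q := fun a b => by
    rw [hqdef]; apply add_pow_char_pow
  have hfrob_neg : ∀ a : K, (-a) ^ q = -(a ^ q) := by
    intro a
    have h := hfrob_add a (-a)
    rw [add_neg_cancel, zero_pow (by omega)] at h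
    exact eq_neg_of_add_eq_zero_right h.symm
  have hpow_card : ∀ a : K, a ^ (q * q) = a := by
    intro a
    have : q * q = q ^ 2 := (sq q).symm
    rw [this, ← hK]
    exact FiniteField.pow_card a
  have hconj : ∀ x y : Fin n → K, (∑ i, x i ^ q * y i) ^ q = ∑ i, y i ^ q * x i := by
    intro x y
    rw [sum_pow_char_pow]
    apply Finset.sum_congr rfl
    intro i _
    rw [mul_pow, ← pow_mul, hpow_card]
    ring
  -- the Hermitian dual as a kernel
  let b : Module.Basis (Fin k) K C := Module.finBasisOfFinrankEq K C hdim
  let M : Matrix (Fin k) (Fin n) K := Matrix.of fun j i => ((b j : Fin n → K) i) ^ q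
  let L : (Fin n → K) →ₗ[K] (Fin k → K) := M.mulVecLin
  set W : Submodule K (Fin n → K) := LinearMap.ker L with hWdef
  have hmemW : ∀ y, y ∈ W ↔ ∀ j, ∑ i, ((b j : Fin n → K) i) ^ q * y i = 0 := by
    intro y
    simp [hWdef, L, M, LinearMap.mem_ker, Matrix.mulVecLin_apply, Matrix.mulVec,
      dotProduct, funext_iff]
  have hWdual : ∀ y ∈ W, ∀ x ∈ C, ∑ i, (x i) ^ q * y i = 0 := by
    intro y hy x hx
    have hrepr := b.sum_repr ⟨x, hx⟩
    set c : Fin k → K := fun j => b.repr ⟨x, hx⟩ j with hc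
    have hx' : x = ∑ j, c j • (b j : Fin n → K) := by
      have h := congrArg (Subtype.val) hrepr
      simp only [Submodule.coe_sum, SetLike.val_smul] at h
      exact h.symm
    rw [hx']
    have hterm : ∀ i, ((∑ j, c j • (b j : Fin n → K)) i) ^ q * y i
        = ∑ j, c j ^ q * (((b j : Fin n → K) i) ^ q * y i) := by
      intro i
      rw [Finset.sum_apply]
      simp only [Pi.smul_apply, smul_eq_mul]
      rw [sum_pow_char_pow, Finset.sum_mul]
      apply Finset.sum_congr rfl
      intro j _
      rw [mul_pow]
      ring
    simp only [hterm]
    rw [Finset.sum_comm]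
    apply Finset.sum_eq_zero
    intro j _
    rw [← Finset.mul_sum, (hmemW y).1 hy j, mul_zero]
  have hCW : C ≤ W := by
    intro x hx
    rw [hmemW]
    intro j
    exact hso _ (b j).2 x hx
  -- rank of W
  have hWrank : k + 2 ≤ Module.finrank K W := by
    have h1 := LinearMap.finrank_range_add_finrank_ker L
    have h2 : Module.finrank K (LinearMap.range L) ≤ k := by
      have := Submodule.finrank_le (LinearMap.range L)
      simpa [Module.finrank_pi] using this
    have h3 : Module.finrank K (Fin n → K) = n := by simp [Module.finrank_pi]
    rw [h3] at h1
    rw [← hWdef] at h1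
    omega
  -- pick u ∈ W \ C
  have hCltW : C < W := by
    refine lt_of_le_of_ne hCW fun h => ?_
    rw [← h] at hWrank
    omega
  obtain ⟨u, huW, huC⟩ := SetLike.exists_of_lt hCltW
  have hu0 : u ≠ 0 := fun h => huC (h ▸ C.zero_mem)
  -- pick w ∈ W \ (C ⊔ span u)
  set C1 : Submodule K (Fin n → K) := C ⊔ Submodule.span K {u} with hC1def
  have hC1W : C1 ≤ W := sup_le hCW ((Submodule.span_singleton_le_iff_mem u W).2 huW)
  have hC1rank : Module.finrank K C1 ≤ k + 1 := by
    have h := Submodule.finrank_sup_add_finrank_inf_eq C (Submodule.span K {u})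
    rw [hdim, finrank_span_singleton hu0, ← hC1def] at h
    omega
  have hC1ltW : C1 < W := by
    refine lt_of_le_of_ne hC1W fun h => ?_
    rw [h] at hC1rank
    omega
  obtain ⟨w, hwW, hwC1⟩ := SetLike.exists_of_lt hC1ltW
  -- sesquilinear expansion
  have Hexpand : ∀ (x x' y y' : Fin n → K) (r r' : K),
      ∑ i, ((x + r • x') i) ^ q * ((y + r' • y') i)
      = (∑ i, x i ^ q * y i) + r' * (∑ i, x i ^ q * y' i)
        + r ^ q * (∑ i, x' i ^ q * y i) + r ^ q * r' * (∑ i, x' i ^ q * y' i) := by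
    intro x x' y y' r r'
    simp only [Pi.add_apply, Pi.smul_apply, smul_eq_mul, Finset.mul_sum]
    rw [← Finset.sum_add_distrib, ← Finset.sum_add_distrib, ← Finset.sum_add_distrib]
    apply Finset.sum_congr rfl
    intro i _
    rw [hfrob_add, mul_pow]
    ring
  have Hright : ∀ (x y y' : Fin n → K) (r : K),
      ∑ i, x i ^ q * ((y + r • y') i)
      = (∑ i, x i ^ q * y i) + r * (∑ i, x i ^ q * y' i) := by
    intro x y y' r
    simp only [Pi.add_apply, Pi.smul_apply, smul_eq_mul, Finset.mul_sum]
    rw [← Finset.sum_add_distrib]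
    apply Finset.sum_congr rfl
    intro i _
    ring
  -- the final construction given a good vector v
  have final : ∀ v : Fin n → K, v ∈ W → v ∉ C → (∑ i, v i ^ q * v i) = 0 →
      ∃ C' : Submodule K (Fin n → K), C ≤ C' ∧ Module.finrank K C' = k + 1 ∧
        ∀ x ∈ C', ∀ y ∈ C', ∑ i, (x i) ^ q * y i = 0 := by
    intro v hvW hvC hvv
    have hv0 : v ≠ 0 := fun h => hvC (h ▸ C.zero_mem)
    refine ⟨C ⊔ Submodule.span K {v}, le_sup_left, ?_, ?_⟩
    · have hinf : C ⊓ Submodule.span K {v} = ⊥ := by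
        rw [eq_bot_iff]
        rintro x hx
        rw [Submodule.mem_inf] at hx
        obtain ⟨hxC, hxs⟩ := hx
        obtain ⟨r, rfl⟩ := Submodule.mem_span_singleton.1 hxs
        rcases eq_or_ne r 0 with rfl | hr
        · simp
        · exact absurd (by simpa [smul_smul, inv_mul_cancel₀ hr] using C.smul_mem r⁻¹ hxC)
            hvC
      have h := Submodule.finrank_sup_add_finrank_inf_eq C (Submodule.span K {v})
      rw [hinf, hdim, finrank_span_singleton hv0, finrank_bot] at h
      omega
    · intro x hx y hy
      rw [Submodule.mem_sup] at hx hy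
      obtain ⟨c, hc, z, hz, rfl⟩ := hx
      obtain ⟨c', hc', z', hz', rfl⟩ := hy
      obtain ⟨r, rfl⟩ := Submodule.mem_span_singleton.1 hz
      obtain ⟨r', rfl⟩ := Submodule.mem_span_singleton.1 hz'
      rw [Hexpand, hso c hc c' hc', hWdual v hvW c hc]
      have h1 : ∑ i, v i ^ q * c' i = 0 := by
        rw [← hconj c' v, hWdual v hvW c' hc', zero_pow (by omega : q ≠ 0)]
      rw [h1, hvv]
      ring
  -- find the good vector
  set α : K := ∑ i, u i ^ q * u i with hα
  have hαfix : α ^ q = α := hconj u u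
  by_cases hα0 : α = 0
  · exact final u huW huC hα0
  · set γ : K := ∑ i, u i ^ q * w i with hγ
    set w' : Fin n → K := w + (-(γ / α)) • u with hw'
    have hw'W : w' ∈ W := W.add_mem hwW (W.smul_mem _ huW)
    have hw'C1 : w' ∉ C1 → True := fun _ => trivial
    have hw'notC1 : w' ∉ C1 := by
      intro hmem
      apply hwC1
      have : w = w' + (γ / α) • u := by
        rw [hw', add_assoc, ← add_smul, neg_add_cancel, zero_smul, add_zero]
      rw [this]
      exact C1.add_mem hmem (Submodule.mem_sup_right (Submodule.smul_mem _ _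
        (Submodule.mem_span_singleton_self u)))
    have huw' : ∑ i, u i ^ q * w' i = 0 := by
      rw [hw', Hright, ← hγ, ← hα]
      field_simp
      ring
    have hw'u : ∑ i, w' i ^ q * u i = 0 := by
      rw [← hconj u w', huw', zero_pow (by omega : q ≠ 0)]
    set β : K := ∑ i, w' i ^ q * w' i with hβ
    have hβfix : β ^ q = β := hconj w' w'
    by_cases hβ0 : β = 0
    · exact final w' hw'W (fun h => hw'notC1 (Submodule.mem_sup_left h)) hβ0
    · set s : K := -(α / β) with hs
      have hs0 : s ≠ 0 := by
        simp [hs, div_eq_zero_iff, hα0, hβ0]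
      have hsfix : s ^ q = s := by
        rw [hs, hfrob_neg, div_pow, hαfix, hβfix]
      obtain ⟨t, ht⟩ := herm_norm_surj q hq2 K hK s hs0 hsfix
      have ht0 : t ≠ 0 := by
        intro h
        rw [h, zero_pow (by omega : q + 1 ≠ 0)] at ht
        exact hs0 ht.symm
      set v : Fin n → K := u + t • w' with hv
      have hvW : v ∈ W := W.add_mem huW (W.smul_mem _ hw'W)
      have hvC : v ∉ C := by
        intro hmem
        apply hw'notC1
        have hu1 : u ∈ C1 := Submodule.mem_sup_right (Submodule.mem_span_singleton_self u)
        have hv1 : v ∈ C1 := Submodule.mem_sup_left hmem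
        have htw' : t • w' ∈ C1 := by
          have : t • w' = v - u := by rw [hv]; abel
          rw [this]
          exact C1.sub_mem hv1 hu1
        have := C1.smul_mem t⁻¹ htw'
        rwa [smul_smul, inv_mul_cancel₀ ht0, one_smul] at this
      have hvv : ∑ i, v i ^ q * v i = 0 := by
        rw [hv, Hexpand, ← hα, huw', hw'u, ← hβ]
        have : t ^ q * t = t ^ (q + 1) := by rw [pow_succ]
        rw [this, ht, hs]
        field_simp
        ring
      exact final v hvW hvC hvv
end

section
/- Let C be an [n,k] Hermitian self-orthogonal linear code over F_{q^2} with n = 2k + l and l ≥ 2. Then there exists a chain of Hermitian self-orthogonal linear codes C = C_0 ⊆ C_1 ⊆ ... ⊆ C_m with m = ⌊l/2⌋ and dim C_{i+1} = dim C_i + 1 for all i. -/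
open Module

lemma my_charP (q p e : ℕ) (hp : p.Prime) (he : 0 < e) (hq : q = p ^ e)
    (K : Type) [Field K] [Fintype K] (hK : Fintype.card K = q ^ 2) : CharP K p := by
  obtain ⟨p', hc⟩ := CharP.exists K
  haveI := hc
  haveI hp' : Fact p'.Prime := ⟨CharP.char_is_prime K p'⟩
  obtain ⟨m, hp'', hm⟩ := FiniteField.card K p'
  rw [hK, hq, ← pow_mul] at hm
  have : p' = p := by
    have h1 : p' ∣ p ^ (e * 2) := by rw [hm]; exact dvd_pow_self p' m.2.ne'
    exact ((Nat.prime_dvd_prime_iff_eq hp'.1 hp).mp (hp'.1.dvd_of_dvd_pow h1))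
  rwa [this] at hc

lemma norm_surj (q : ℕ) (hq2 : 2 ≤ q) (K : Type) [Field K] [Fintype K]
    (hK : Fintype.card K = q ^ 2) (a : K) (ha : a ≠ 0) (haq : a ^ q = a) :
    ∃ lam : K, lam ^ (q + 1) = a := by
  haveI : Fintype Kˣ := Fintype.ofFinite Kˣ
  obtain ⟨g, hg⟩ := IsCyclic.exists_generator (α := Kˣ)
  have horder : orderOf g = q ^ 2 - 1 := by
    rw [orderOf_eq_card_of_forall_mem_zpowers hg, Nat.card_units, Nat.card_eq_fintype_card, hK]
  set u : Kˣ := Units.mk0 a ha with hu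
  obtain ⟨t, ht⟩ := (mem_powers_iff_mem_zpowers.mpr (hg u))
  have ht' : g ^ t = u := ht
  have hu1 : u ^ (q - 1) = 1 := by
    have huq : u ^ q = u := by ext; push_cast [hu]; exact haq
    have h2 : u ^ q = u ^ (q - 1) * u := by rw [← pow_succ, Nat.sub_add_cancel (by omega)]
    rw [h2] at huq
    exact mul_right_cancel (by rwa [one_mul])
  have hdvd : orderOf g ∣ t * (q - 1) := by
    apply orderOf_dvd_of_pow_eq_one
    rw [pow_mul, ht', hu1]
  rw [horder] at hdvd
  have hfac : q ^ 2 - 1 = (q + 1) * (q - 1) := by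
    obtain ⟨r, rfl⟩ : ∃ r, q = r + 1 := ⟨q - 1, by omega⟩
    have h5 : (r + 1 + 1) * (r + 1 - 1) + 1 = (r + 1) ^ 2 := by
      simp only [Nat.add_sub_cancel]; ring
    omega
  have hdvd2 : (q + 1) ∣ t := by
    rw [hfac] at hdvd
    exact (Nat.mul_dvd_mul_iff_right (show 0 < q - 1 by omega)).mp hdvd
  obtain ⟨s, hs⟩ := hdvd2
  refine ⟨(g : K) ^ s, ?_⟩
  have h3 : (g ^ s) ^ (q + 1) = u := by rw [← pow_mul, mul_comm, ← hs, ht']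
  calc ((g : K) ^ s) ^ (q + 1) = ((((g ^ s) ^ (q+1) : Kˣ) : K)) := by push_cast; ring
    _ = a := by rw [h3]; simp [hu]

open Module Finset

section
variable (q p e : ℕ) (K : Type) [Field K] [Fintype K]

lemma ext_step (hp : p.Prime) (he : 0 < e) (hqpe : q = p ^ e)
    (hK : Fintype.card K = q ^ 2)
    (n k : ℕ) (hnk : 2 * k + 2 ≤ n)
    (C : Submodule K (Fin n → K)) (hdim : Module.finrank K C = k)
    (hso : ∀ x ∈ C, ∀ y ∈ C, ∑ i, (x i) ^ q * y i = 0) :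
    ∃ C' : Submodule K (Fin n → K), C ≤ C' ∧ Module.finrank K C' = k + 1 ∧
      ∀ x ∈ C', ∀ y ∈ C', ∑ i, (x i) ^ q * y i = 0 := by
  classical
  haveI : CharP K p := my_charP q p e hp he hqpe K hK
  haveI : Fact p.Prime := ⟨hp⟩
  have hq2 : 2 ≤ q := by
    rw [hqpe]; calc 2 ≤ p := hp.two_le
      _ ≤ p ^ e := Nat.le_self_pow he.ne' p
  -- the Frobenius x ↦ x^q as a ring hom
  set σ : K →+* K := iterateFrobenius K p e with hσdef
  have hσ : ∀ x : K, σ x = x ^ q := fun x => by rw [hσdef, iterateFrobenius_def, hqpe]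
  have hσσ : ∀ x : K, σ (σ x) = x := by
    intro x
    rw [hσ, hσ, ← pow_mul, ← pow_two]
    have := FiniteField.pow_card x
    rwa [hK] at this
  -- the semilinear coordinatewise Frobenius
  set φ : (Fin n → K) →ₛₗ[σ] (Fin n → K) :=
    { toFun := fun x i => σ (x i)
      map_add' := fun x y => by funext i; simp
      map_smul' := fun c x => by funext i; simp [smul_eq_mul] } with hφdef
  have hφ : ∀ (x : Fin n → K) (i : Fin n), φ x i = (x i) ^ q := fun x i => hσ (x i)
  have hφinj : Function.Injective φ := by
    intro x y hxy
    funext i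
    have := congrFun hxy i
    simp only [hφdef, LinearMap.coe_mk, AddHom.coe_mk] at this
    exact σ.injective this
  -- the standard bilinear dot product
  set B : LinearMap.BilinForm K (Fin n → K) :=
    LinearMap.mk₂ K (fun x y => ∑ i, x i * y i)
      (fun x x' y => by simp [add_mul, Finset.sum_add_distrib])
      (fun c x y => by simp [Finset.mul_sum, mul_assoc])
      (fun x y y' => by simp [mul_add, Finset.sum_add_distrib])
      (fun c x y => by simp only [smul_eq_mul, Finset.mul_sum]; exact Finset.sum_congr rfl fun i _ => by simp [smul_eq_mul]; ring) with hBdef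
  have hB : ∀ x y : Fin n → K, B x y = ∑ i, x i * y i := fun x y => rfl
  have hΦ : ∀ x y : Fin n → K, B (φ x) y = ∑ i, (x i) ^ q * y i := by
    intro x y; rw [hB]; exact Finset.sum_congr rfl fun i _ => by rw [hφ]
  have Brefl : B.IsRefl := by
    intro x y hxy
    rw [hB] at hxy ⊢
    rw [← hxy]
    exact Finset.sum_congr rfl fun i _ => mul_comm _ _
  have Bnondeg : B.Nondegenerate := by
    refine (LinearMap.IsRefl.nondegenerate_iff_separatingLeft Brefl).mpr ?_
    intro x hx
    funext i
    have := hx (Pi.single i 1)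
    rw [hB] at this
    simpa [Pi.single_apply, Finset.sum_ite_eq] using this
  -- Hermitian symmetry
  have hherm : ∀ x y : Fin n → K, B (φ y) x = σ (B (φ x) y) := by
    intro x y
    rw [hB, hB, map_sum]
    refine Finset.sum_congr rfl fun i _ => ?_
    simp only [hφ]
    have h1 : σ (x i ^ q) = x i := by rw [← hσ (x i), hσσ]
    rw [map_mul, h1, hσ (y i), mul_comm]
  haveI : RingHomSurjective σ := ⟨Finite.injective_iff_surjective.mp σ.injective⟩
  -- image of C under φ
  set D : Submodule K (Fin n → K) := C.map φ with hDdef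
  haveI : Fintype C := Fintype.ofFinite C
  haveI : Fintype D := Fintype.ofFinite D
  have hDdim : finrank K D = k := by
    have hbij : Function.Bijective (fun x : C => (⟨φ x, Submodule.mem_map_of_mem (f := φ) x.2⟩ : D)) := by
      constructor
      · intro a b hab
        exact Subtype.ext (hφinj (congrArg Subtype.val hab))
      · rintro ⟨z, hz⟩
        obtain ⟨x, hx, rfl⟩ := Submodule.mem_map.mp (hDdef ▸ hz)
        exact ⟨⟨x, hx⟩, rfl⟩
    have hcard := Fintype.card_of_bijective hbij
    have h1 : Fintype.card C = Fintype.card K ^ finrank K C := card_eq_pow_finrank (K := K)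
    have h2 : Fintype.card D = Fintype.card K ^ finrank K D := card_eq_pow_finrank (K := K)
    rw [h1, h2, hdim] at hcard
    exact (Nat.pow_right_injective Fintype.one_lt_card hcard.symm)
  -- the orthogonal complement W
  set W : Submodule K (Fin n → K) := B.orthogonal D with hWdef
  have hmemW : ∀ y, y ∈ W ↔ ∀ x ∈ C, B (φ x) y = 0 := by
    intro y
    constructor
    · intro hy x hx
      exact hy (φ x) (Submodule.mem_map_of_mem (f := φ) hx)
    · intro h z hz
      obtain ⟨x, hx, rfl⟩ := Submodule.mem_map.mp (hDdef ▸ hz)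
      exact h x hx
  have hCW : C ≤ W := by
    intro y hy
    rw [hmemW]
    intro x hx
    rw [hΦ]
    exact hso x hx y hy
  haveI : FiniteDimensional K (Fin n → K) := inferInstance
  have hWdim : finrank K W = n - k := by
    rw [hWdef, LinearMap.BilinForm.finrank_orthogonal Bnondeg D, hDdim,
      Module.finrank_fin_fun]
  have hWW : B.orthogonal W = D :=
    LinearMap.BilinForm.orthogonal_orthogonal Bnondeg Brefl D
  -- complement U of C inside W
  obtain ⟨U', hU'⟩ := Submodule.exists_isCompl (C.comap W.subtype)
  set U : Submodule K (Fin n → K) := U'.map W.subtype with hUdef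
  have hUW : U ≤ W := by
    rintro u ⟨⟨u, huW⟩, _, rfl⟩; exact huW
  have hCU : ∀ u, u ∈ C → u ∈ U → u = 0 := by
    rintro u huC ⟨⟨u, huW⟩, hu', rfl⟩
    have h0 : (⟨u, huW⟩ : W) ∈ C.comap W.subtype ⊓ U' := ⟨huC, hu'⟩
    rw [hU'.inf_eq_bot] at h0
    exact congrArg Subtype.val ((Submodule.mem_bot _).mp h0)
  have hsup : ∀ w ∈ W, ∃ c ∈ C, ∃ u ∈ U, w = c + u := by
    intro w hw
    have h0 : (⟨w, hw⟩ : W) ∈ C.comap W.subtype ⊔ U' := by rw [hU'.sup_eq_top]; trivial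
    obtain ⟨c, hc, u, hu, hcu⟩ := Submodule.mem_sup.mp h0
    exact ⟨c.1, hc, u.1, ⟨u, hu, rfl⟩, (congrArg Subtype.val hcu).symm⟩
  have hUdim : finrank K U = n - 2 * k := by
    have h1 : finrank K (C.comap W.subtype) + finrank K U' = finrank K W :=
      Submodule.finrank_add_eq_of_isCompl hU'
    have h2 : finrank K U = finrank K U' := Submodule.finrank_map_subtype_eq W U'
    have h3 : finrank K (C.comap W.subtype) = k := by
      rw [← hdim]
      exact LinearEquiv.finrank_eq (Submodule.comapSubtypeEquivOfLe hCW)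
    have h4 : k ≤ n := by omega
    omega
  -- algebraic helper lemmas for the Hermitian form
  have hadd1 : ∀ x y z : Fin n → K, B (φ (x + y)) z = B (φ x) z + B (φ y) z := by
    intro x y z; rw [map_add, map_add B, LinearMap.add_apply]
  have hsmul1 : ∀ (c : K) (x z : Fin n → K), B (φ (c • x)) z = σ c * B (φ x) z := by
    intro c x z; rw [LinearMap.map_smulₛₗ, LinearMap.map_smul, LinearMap.smul_apply, smul_eq_mul]
  have hadd2 : ∀ x y z : Fin n → K, B (φ x) (y + z) = B (φ x) y + B (φ x) z := by
    intro x y z; rw [map_add]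
  have hsmul2 : ∀ (c : K) (x z : Fin n → K), B (φ x) (c • z) = c * B (φ x) z := by
    intro c x z; rw [map_smul, smul_eq_mul]
  -- nondegeneracy of the Hermitian form on U
  have hUnd : ∀ u ∈ U, (∀ w ∈ U, B (φ u) w = 0) → u = 0 := by
    intro u huU h
    have huW := hUW huU
    have hC0 : ∀ c ∈ C, B (φ u) c = 0 := by
      intro c hc
      rw [hherm c u, ((hmemW u).mp huW) c hc, map_zero]
    have hW0 : ∀ w ∈ W, B (φ u) w = 0 := by
      intro w hw
      obtain ⟨c, hc, v, hv, rfl⟩ := hsup w hw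
      rw [hadd2, hC0 c hc, h v hv, add_zero]
    have hin : φ u ∈ D := by
      rw [← hWW]
      intro w hw
      exact Brefl _ _ (hW0 w hw)
    obtain ⟨c, hc, hcu⟩ := Submodule.mem_map.mp (hDdef ▸ hin)
    have hcu' : c = u := hφinj hcu
    exact hCU u (hcu' ▸ hc) huU
  have hl2 : 2 ≤ finrank K U := by omega
  -- find a nonzero isotropic vector in U
  have hiso : ∃ u ∈ U, u ≠ 0 ∧ B (φ u) u = 0 := by
    by_cases hcase : ∃ u ∈ U, u ≠ 0 ∧ B (φ u) u = 0
    · exact hcase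
    push_neg at hcase
    have hUne : U ≠ ⊥ := by rintro h0; rw [h0, finrank_bot] at hl2; omega
    obtain ⟨u₁, hu₁U, hu₁⟩ := Submodule.exists_mem_ne_zero_of_ne_bot hUne
    set a := B (φ u₁) u₁ with hadef
    have ha : a ≠ 0 := hcase u₁ hu₁U hu₁
    have hnotle : ¬ (U ≤ K ∙ u₁) := by
      intro hle
      have h1 := Submodule.finrank_mono hle
      rw [finrank_span_singleton hu₁] at h1
      omega
    rw [SetLike.le_def] at hnotle
    push_neg at hnotle
    obtain ⟨u₂, hu₂U, hu₂⟩ := hnotle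
    set μ := B (φ u₁) u₂ / a with hμdef
    set v := u₂ - μ • u₁ with hvdef
    have hvU : v ∈ U := U.sub_mem hu₂U (U.smul_mem μ hu₁U)
    have hv0 : v ≠ 0 := by
      intro h0
      apply hu₂
      have h1 : u₂ = μ • u₁ := by rwa [hvdef, sub_eq_zero] at h0
      rw [h1]; exact Submodule.smul_mem _ _ (Submodule.mem_span_singleton_self u₁)
    have hOrth : B (φ u₁) v = 0 := by
      rw [hvdef, map_sub, hsmul2, ← hadef, hμdef, div_mul_cancel₀ _ ha, sub_self]
    have hOrth' : B (φ v) u₁ = 0 := by rw [hherm u₁ v, hOrth, map_zero]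
    set b := B (φ v) v with hbdef
    have hb : b ≠ 0 := hcase v hvU hv0
    have hfix : ∀ x : Fin n → K, σ (B (φ x) x) = B (φ x) x := fun x => (hherm x x).symm
    have hc0 : (-(a / b)) ≠ 0 := by
      simp only [neg_ne_zero]
      exact div_ne_zero ha hb
    have hcfix : (-(a / b)) ^ q = -(a / b) := by
      rw [← hσ, map_neg, map_div₀, hfix u₁, hfix v]
    obtain ⟨lam, hlam⟩ := norm_surj q hq2 K hK _ hc0 hcfix
    have hlam0 : lam ≠ 0 := by
      rintro rfl
      rw [zero_pow (by omega : q + 1 ≠ 0)] at hlam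
      exact hc0 hlam.symm
    refine ⟨u₁ + lam • v, U.add_mem hu₁U (U.smul_mem _ hvU), ?_, ?_⟩
    · intro h0
      apply hu₂
      have h1 : lam • u₂ = (lam * μ - 1) • u₁ := by
        rw [hvdef] at h0
        linear_combination (norm := module) h0
      have h2 : u₂ = (lam⁻¹ * (lam * μ - 1)) • u₁ := by
        rw [mul_smul, ← h1, inv_smul_smul₀ hlam0]
      rw [h2]; exact Submodule.smul_mem _ _ (Submodule.mem_span_singleton_self u₁)
    · have e1 : B (φ (u₁ + lam • v)) (u₁ + lam • v)
          = B (φ u₁) u₁ + lam * B (φ u₁) v + σ lam * B (φ v) u₁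
            + σ lam * (lam * B (φ v) v) := by
        rw [hadd1, hsmul1, hadd2, hadd2, hsmul2, hsmul2]; ring
      have h2 : lam ^ q * (lam * b) = -a := by
        rw [← mul_assoc, (by ring : lam ^ q * lam = lam ^ (q + 1)), hlam]
        field_simp
      rw [e1, hOrth, hOrth', hσ lam, ← hadef, ← hbdef, mul_zero, mul_zero, add_zero,
        add_zero, h2, add_neg_cancel]
  -- assemble the extension
  obtain ⟨u, huU, hu0, huiso⟩ := hiso
  have huW := hUW huU
  have huC : u ∉ C := fun h => hu0 (hCU u h huU)
  have hCu : ∀ c ∈ C, B (φ c) u = 0 := fun c hc => ((hmemW u).mp huW) c hc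
  have huCr : ∀ c ∈ C, B (φ u) c = 0 := by
    intro c hc; rw [hherm c u, hCu c hc, map_zero]
  refine ⟨C ⊔ K ∙ u, le_sup_left, ?_, ?_⟩
  · have hinf : C ⊓ (K ∙ u) = ⊥ := by
      rw [eq_bot_iff]; rintro x ⟨hxC, hxS⟩
      obtain ⟨t, rfl⟩ := Submodule.mem_span_singleton.mp hxS
      rcases eq_or_ne t 0 with rfl | ht
      · simp
      · exfalso; apply huC
        have h1 : u = t⁻¹ • (t • u) := by rw [inv_smul_smul₀ ht]
        rw [h1]; exact C.smul_mem _ hxC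
    have h2 := Submodule.finrank_sup_add_finrank_inf_eq C (K ∙ u)
    rw [hinf, finrank_bot, add_zero, hdim, finrank_span_singleton hu0] at h2
    exact h2
  · intro x hx y hy
    rw [← hΦ]
    obtain ⟨c, hc, z, hz, rfl⟩ := Submodule.mem_sup.mp hx
    obtain ⟨c', hc', z', hz', rfl⟩ := Submodule.mem_sup.mp hy
    obtain ⟨s, rfl⟩ := Submodule.mem_span_singleton.mp hz
    obtain ⟨t, rfl⟩ := Submodule.mem_span_singleton.mp hz'
    have h00 : B (φ c) c' = 0 := by rw [hΦ]; exact hso c hc c' hc'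
    rw [hadd1, hsmul1, hadd2, hadd2, hsmul2, hsmul2, h00, hCu c hc, huCr c' hc', huiso]
    ring
end

open Classical in
noncomputable def nextCode (q : ℕ) (K : Type) [Field K] [Fintype K] (n : ℕ)
    (S : Submodule K (Fin n → K)) : Submodule K (Fin n → K) :=
  if h : ∃ S' : Submodule K (Fin n → K), S ≤ S' ∧
      Module.finrank K S' = Module.finrank K S + 1 ∧
      ∀ x ∈ S', ∀ y ∈ S', ∑ i, (x i) ^ q * y i = 0 then h.choose else S

lemma nextCode_spec (q : ℕ) (K : Type) [Field K] [Fintype K] (n : ℕ)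
    (S : Submodule K (Fin n → K))
    (h : ∃ S' : Submodule K (Fin n → K), S ≤ S' ∧
      Module.finrank K S' = Module.finrank K S + 1 ∧
      ∀ x ∈ S', ∀ y ∈ S', ∑ i, (x i) ^ q * y i = 0) :
    S ≤ nextCode q K n S ∧
      Module.finrank K (nextCode q K n S) = Module.finrank K S + 1 ∧
      ∀ x ∈ nextCode q K n S, ∀ y ∈ nextCode q K n S, ∑ i, (x i) ^ q * y i = 0 := by
  unfold nextCode
  rw [dif_pos h]
  exact ⟨h.choose_spec.1, h.choose_spec.2.1, h.choose_spec.2.2⟩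

/-- an [n,k] Hermitian self-orthogonal code with n = 2k + l, l ≥ 2,
lies at the bottom of a chain of Hermitian self-orthogonal codes of length ⌊l/2⌋
with dimensions increasing by one at each step. -/
theorem stmt4 (q : ℕ) (hq : ∃ p e : ℕ, p.Prime ∧ 0 < e ∧ q = p ^ e)
    (K : Type) [Field K] [Fintype K] (hK : Fintype.card K = q ^ 2)
    (n k l : ℕ) (hl : 2 ≤ l) (hn : n = 2 * k + l)
    (C : Submodule K (Fin n → K)) (hdim : Module.finrank K C = k)
    (hso : ∀ x ∈ C, ∀ y ∈ C, ∑ i, (x i) ^ q * y i = 0) :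
    ∃ Cs : ℕ → Submodule K (Fin n → K),
      Cs 0 = C ∧
      (∀ i ≤ l / 2, ∀ x ∈ Cs i, ∀ y ∈ Cs i, ∑ j, (x j) ^ q * y j = 0) ∧
      (∀ i < l / 2, Cs i ≤ Cs (i + 1) ∧
        Module.finrank K (Cs (i + 1)) = Module.finrank K (Cs i) + 1) := by
  obtain ⟨p, e, hp, he, hqpe⟩ := hq
  refine ⟨fun i => (nextCode q K n)^[i] C, rfl, ?_, ?_⟩
  all_goals
    have key : ∀ i, i ≤ l / 2 →
        Module.finrank K ((nextCode q K n)^[i] C) = k + i ∧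
        ∀ x ∈ (nextCode q K n)^[i] C, ∀ y ∈ (nextCode q K n)^[i] C,
          ∑ j, (x j) ^ q * y j = 0 := by
      intro i
      induction i with
      | zero => exact fun _ => ⟨by rw [Function.iterate_zero_apply, add_zero]; exact hdim, hso⟩
      | succ i ih =>
        intro hi
        obtain ⟨hd, hs⟩ := ih (by omega)
        have hstep : ∃ S' : Submodule K (Fin n → K), (nextCode q K n)^[i] C ≤ S' ∧
            Module.finrank K S' = Module.finrank K ((nextCode q K n)^[i] C) + 1 ∧
            ∀ x ∈ S', ∀ y ∈ S', ∑ j, (x j) ^ q * y j = 0 := by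
          obtain ⟨S', h1, h2, h3⟩ := ext_step q p e K hp he hqpe hK n (k + i) (by omega)
            ((nextCode q K n)^[i] C) hd hs
          exact ⟨S', h1, by rw [hd, h2], h3⟩
        obtain ⟨h1, h2, h3⟩ := nextCode_spec q K n ((nextCode q K n)^[i] C) hstep
        rw [Function.iterate_succ_apply']
        exact ⟨by rw [h2, hd]; ring, h3⟩
  · exact fun i hi => (key i hi).2
  · intro i hi
    beta_reduce
    obtain ⟨hd, hs⟩ := key i (by omega)
    have hstep : ∃ S' : Submodule K (Fin n → K), (nextCode q K n)^[i] C ≤ S' ∧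
        Module.finrank K S' = Module.finrank K ((nextCode q K n)^[i] C) + 1 ∧
        ∀ x ∈ S', ∀ y ∈ S', ∑ j, (x j) ^ q * y j = 0 := by
      obtain ⟨S', h1, h2, h3⟩ := ext_step q p e K hp he hqpe hK n (k + i) (by omega)
        ((nextCode q K n)^[i] C) hd hs
      exact ⟨S', h1, by rw [hd, h2], h3⟩
    obtain ⟨h1, h2, h3⟩ := nextCode_spec q K n ((nextCode q K n)^[i] C) hstep
    rw [Function.iterate_succ_apply']
    exact ⟨h1, h2⟩
end

section
/- Every Hermitian self-orthogonal linear code of even length n over F_{q^2} is contained in a Hermitian self-dual code of length n (a code of dimension n/2 equal to its own Hermitian dual). -/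
open Module Finset

lemma norm_surj_s5 {q : ℕ} (hq1 : 1 < q) {K : Type} [Field K] [Fintype K]
    (hK : Fintype.card K = q ^ 2) (t : K) (ht : t ^ q = t) :
    ∃ c : K, c ^ q * c = t := by
  rcases eq_or_ne t 0 with rfl | ht0
  · exact ⟨0, by simp [pow_eq_zero_iff (by omega : q ≠ 0)]⟩
  classical
  obtain ⟨g, hg⟩ := IsCyclic.exists_generator (α := Kˣ)
  have hcard : orderOf g = q ^ 2 - 1 := by
    rw [orderOf_eq_card_of_forall_mem_zpowers hg, Nat.card_eq_fintype_card,
      Fintype.card_units, hK]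
  lift t to Kˣ using ht0.isUnit with tu htu
  obtain ⟨m, hm⟩ : tu ∈ Submonoid.powers g := by
    rw [mem_powers_iff_mem_zpowers]; exact hg tu
  simp only at hm
  have htq : tu ^ (q - 1) = 1 := by
    have h1 : (tu : K) ^ (q - 1) * (tu : K) = 1 * (tu : K) := by
      rw [← pow_succ, one_mul]
      have : q - 1 + 1 = q := by omega
      rw [this]; exact_mod_cast ht
    have h2 := mul_right_cancel₀ ht0 h1
    ext; push_cast; exact h2
  have hdvd : q ^ 2 - 1 ∣ m * (q - 1) := by
    rw [← hcard]
    apply orderOf_dvd_of_pow_eq_one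
    rw [pow_mul, hm, htq]
  have hq2 : q ^ 2 - 1 = (q + 1) * (q - 1) := by
    have := Nat.sq_sub_sq q 1
    simpa using this
  have hdvd2 : q + 1 ∣ m := by
    rw [hq2] at hdvd
    exact (Nat.mul_dvd_mul_iff_right (by omega : 0 < q - 1)).mp hdvd
  obtain ⟨k, hk⟩ := hdvd2
  refine ⟨(g : K) ^ k, ?_⟩
  have h3 : ((g : K) ^ k) ^ q * (g : K) ^ k = (g : K) ^ (k * (q + 1)) := by
    rw [← pow_succ, ← pow_mul]
  rw [h3, mul_comm k (q + 1), ← hk]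
  exact_mod_cast congrArg Units.val hm

lemma exists_pow_hom {q : ℕ} (hq : ∃ p e : ℕ, p.Prime ∧ 0 < e ∧ q = p ^ e)
    {K : Type} [Field K] [Fintype K] (hK : Fintype.card K = q ^ 2) :
    ∃ φ : K →+* K, ∀ x, φ x = x ^ q := by
  obtain ⟨p, e, hp, he, rfl⟩ := hq
  have hchar : CharP K p := by
    obtain ⟨p', hp'⟩ := CharP.exists K
    haveI := hp'
    obtain ⟨n, hn', hcard⟩ := FiniteField.card K p'
    rw [hK, ← pow_mul] at hcard
    have hd : p' ∣ p ^ (e * 2) := by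
      rw [hcard]; exact dvd_pow_self p' n.ne_zero
    have : p' = p := (Nat.prime_dvd_prime_iff_eq hn' hp).mp (hn'.dvd_of_dvd_pow hd)
    rwa [← this]
  haveI := hchar
  haveI : ExpChar K p := ExpChar.prime hp
  exact ⟨iterateFrobenius K p e, fun x => by rw [iterateFrobenius_def]⟩

variable {K : Type} [Field K] {n : ℕ}

/-- the standard dot product bilinear form on `Fin n → K` -/
noncomputable def dotForm (K : Type) [Field K] (n : ℕ) : LinearMap.BilinForm K (Fin n → K) :=
  LinearMap.mk₂ K (fun x y => ∑ i, x i * y i)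
    (fun m₁ m₂ nn => by simp [add_mul, Finset.sum_add_distrib])
    (fun c m nn => by simp [Finset.mul_sum, mul_assoc])
    (fun m n₁ n₂ => by simp [mul_add, Finset.sum_add_distrib])
    (fun c m nn => by simp [Finset.mul_sum]; exact Finset.sum_congr rfl fun i _ => by ring)

lemma dotForm_apply (x y : Fin n → K) : dotForm K n x y = ∑ i, x i * y i := rfl

lemma dotForm_refl : (dotForm K n).IsRefl := by
  intro x y h
  rw [dotForm_apply] at h ⊢
  rw [← h]; exact Finset.sum_congr rfl fun i _ => mul_comm _ _

lemma dotForm_nondeg : (dotForm K n).Nondegenerate := by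
  refine (LinearMap.IsRefl.nondegenerate_iff_separatingLeft (B := dotForm K n) fun x y h => dotForm_refl x y h).mpr ?_
  intro x h
  funext i
  have := h (Pi.single i 1)
  rw [dotForm_apply] at this
  simpa [Pi.single_apply, Finset.sum_ite_eq] using this

variable (φ : K →+* K) (hinv : ∀ x : K, φ (φ x) = x)

/-- image of a submodule under coordinatewise `φ` -/
def conjS (D : Submodule K (Fin n → K)) : Submodule K (Fin n → K) where
  carrier := (fun x : Fin n → K => fun i => φ (x i)) '' D
  zero_mem' := ⟨0, D.zero_mem, by funext i; simp⟩
  add_mem' := by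
    rintro a b ⟨x, hx, rfl⟩ ⟨y, hy, rfl⟩
    exact ⟨x + y, D.add_mem hx hy, by funext i; simp⟩
  smul_mem' := by
    rintro c a ⟨x, hx, rfl⟩
    exact ⟨φ c • x, D.smul_mem _ hx, by funext i; simp [hinv]⟩

lemma mem_conjS {D : Submodule K (Fin n → K)} {y : Fin n → K} :
    y ∈ conjS φ hinv D ↔ ∃ x ∈ D, (fun i => φ (x i)) = y := Iff.rfl

/-- Hermitian orthogonal complement -/
noncomputable def hOrth (D : Submodule K (Fin n → K)) : Submodule K (Fin n → K) :=
  (dotForm K n).orthogonal (conjS φ hinv D)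

lemma mem_hOrth {D : Submodule K (Fin n → K)} {x : Fin n → K} :
    x ∈ hOrth φ hinv D ↔ ∀ c ∈ D, ∑ i, φ (x i) * c i = 0 := by
  have hφi : Function.Injective φ := Function.LeftInverse.injective hinv
  constructor
  · intro h c hc
    have := h (fun i => φ (c i)) ⟨c, hc, rfl⟩
    rw [dotForm_apply] at this
    apply hφi
    rw [map_sum, map_zero]
    rw [← this]
    exact Finset.sum_congr rfl fun i _ => by rw [map_mul, hinv, mul_comm]
  · rintro h y ⟨c, hc, rfl⟩
    rw [dotForm_apply]
    apply hφi
    rw [map_sum, map_zero]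
    rw [← h c hc]
    exact Finset.sum_congr rfl fun i _ => by rw [map_mul, hinv, mul_comm]

lemma finrank_conjS [Fintype K] (D : Submodule K (Fin n → K)) :
    finrank K (conjS φ hinv D) = finrank K D := by
  classical
  haveI : Fintype D := Fintype.ofFinite _
  haveI : Fintype (conjS φ hinv D) := Fintype.ofFinite _
  have hcardeq : Fintype.card (conjS φ hinv D) = Fintype.card D := by
    apply Fintype.card_congr
    refine ⟨fun y => ⟨fun i => φ (y.1 i), ?_⟩, fun x => ⟨fun i => φ (x.1 i), ?_⟩, ?_, ?_⟩
    · obtain ⟨x, hx, hxy⟩ := y.2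
      have : (fun i => φ (y.1 i)) = x := by
        funext i; rw [← hxy]; exact hinv _
      rw [this]; exact hx
    · exact ⟨x.1, x.2, rfl⟩
    · intro y; ext i; exact hinv _
    · intro x; ext i; exact hinv _
  have h1 : Fintype.card (conjS φ hinv D) = Fintype.card K ^ finrank K (conjS φ hinv D) :=
    card_eq_pow_finrank
  have h2 : Fintype.card D = Fintype.card K ^ finrank K D := card_eq_pow_finrank
  rw [h1, h2] at hcardeq
  exact Nat.pow_right_injective Fintype.one_lt_card hcardeq

lemma finrank_hOrth [Fintype K] (D : Submodule K (Fin n → K)) :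
    finrank K (hOrth φ hinv D) = n - finrank K D := by
  rw [hOrth, LinearMap.BilinForm.finrank_orthogonal dotForm_nondeg,
    finrank_conjS]
  simp [Module.finrank_pi]

section
variable {K : Type} [Field K] {n : ℕ} (φ : K →+* K)

lemma hB_add_right (x y z : Fin n → K) :
    ∑ i, φ (x i) * (y + z) i = (∑ i, φ (x i) * y i) + ∑ i, φ (x i) * z i := by
  simp [mul_add, Finset.sum_add_distrib]

lemma hB_sub_right (x y z : Fin n → K) :
    ∑ i, φ (x i) * (y - z) i = (∑ i, φ (x i) * y i) - ∑ i, φ (x i) * z i := by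
  simp [mul_sub, Finset.sum_sub_distrib]

lemma hB_smul_right (c : K) (x y : Fin n → K) :
    ∑ i, φ (x i) * (c • y) i = c * ∑ i, φ (x i) * y i := by
  rw [Finset.mul_sum]
  exact Finset.sum_congr rfl fun i _ => by simp; ring

lemma hB_add_left (x y z : Fin n → K) :
    ∑ i, φ ((x + y) i) * z i = (∑ i, φ (x i) * z i) + ∑ i, φ (y i) * z i := by
  simp [add_mul, Finset.sum_add_distrib]

lemma hB_smul_left (c : K) (x y : Fin n → K) :
    ∑ i, φ ((c • x) i) * y i = φ c * ∑ i, φ (x i) * y i := by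
  rw [Finset.mul_sum]
  exact Finset.sum_congr rfl fun i _ => by simp [mul_assoc]

lemma hB_conj (hinv : ∀ x : K, φ (φ x) = x) (x y : Fin n → K) :
    φ (∑ i, φ (x i) * y i) = ∑ i, φ (y i) * x i := by
  rw [map_sum]
  exact Finset.sum_congr rfl fun i _ => by rw [map_mul, hinv, mul_comm]

lemma hB_comm_zero (hinv : ∀ x : K, φ (φ x) = x) {x y : Fin n → K} (h : ∑ i, φ (x i) * y i = 0) :
    ∑ i, φ (y i) * x i = 0 := by
  have := congrArg φ h
  rwa [hB_conj φ hinv, map_zero] at this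

end

lemma hB_expand {K : Type} [Field K] {n : ℕ} (φ : K →+* K) (x y : Fin n → K) (s t : K) :
    ∑ i, φ ((x + s • y) i) * (x + t • y) i
      = (∑ i, φ (x i) * x i) + t * (∑ i, φ (x i) * y i)
        + φ s * (∑ i, φ (y i) * x i) + φ s * (t * ∑ i, φ (y i) * y i) := by
  simp only [hB_add_left, hB_add_right, hB_smul_left, hB_smul_right]
  ring

section Main
variable {q : ℕ} {K : Type} [Field K] [Fintype K] {n : ℕ}

lemma isotropic (hq1 : 1 < q) (hK : Fintype.card K = q ^ 2)
    (φ : K →+* K) (hφ : ∀ x, φ x = x ^ q) (hinv : ∀ x : K, φ (φ x) = x)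
    (C : Submodule K (Fin n → K)) {v w : Fin n → K}
    (hv : v ∈ hOrth φ hinv C) (hw : w ∈ hOrth φ hinv C)
    (hvC : v ∉ C) (hw1 : w ∉ C ⊔ K ∙ v) :
    ∃ u, u ∈ hOrth φ hinv C ∧ u ∉ C ∧ ∑ i, φ (u i) * u i = 0 := by
  by_cases ha : (∑ i, φ (v i) * v i) = 0
  · exact ⟨v, hv, hvC, ha⟩
  set c0 : K := (∑ i, φ (v i) * v i)⁻¹ * ∑ i, φ (v i) * w i with hc0
  set w' : Fin n → K := w - c0 • v with hw'
  have hw'O : w' ∈ hOrth φ hinv C := Submodule.sub_mem _ hw (Submodule.smul_mem _ _ hv)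
  have hw'1 : w' ∉ C ⊔ K ∙ v := by
    intro hmem
    apply hw1
    have hrw : w = w' + c0 • v := by rw [hw']; ring_nf
    rw [hrw]
    exact Submodule.add_mem _ hmem
      (Submodule.smul_mem _ _ (Submodule.mem_sup_right (Submodule.mem_span_singleton_self v)))
  have hvw' : ∑ i, φ (v i) * w' i = 0 := by
    rw [hw', hB_sub_right, hB_smul_right, hc0]
    field_simp
    ring
  have hw'v : ∑ i, φ (w' i) * v i = 0 := hB_comm_zero φ hinv hvw'
  by_cases hb : (∑ i, φ (w' i) * w' i) = 0
  · exact ⟨w', hw'O, fun hc => hw'1 (Submodule.mem_sup_left hc), hb⟩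
  have hafix : φ (∑ i, φ (v i) * v i) = ∑ i, φ (v i) * v i := hB_conj φ hinv v v
  have hbfix : φ (∑ i, φ (w' i) * w' i) = ∑ i, φ (w' i) * w' i := hB_conj φ hinv w' w'
  set t : K := -(∑ i, φ (v i) * v i) * (∑ i, φ (w' i) * w' i)⁻¹ with hT
  have htfix : t ^ q = t := by
    rw [← hφ, hT, map_mul, map_neg, hafix, map_inv₀, hbfix]
  obtain ⟨c, hc⟩ := norm_surj_s5 hq1 hK t htfix
  have hc' : φ c * c = t := by rw [hφ]; exact hc
  have hcne : c ≠ 0 := by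
    intro h
    apply ha
    have h0 : t = 0 := by rw [← hc', h, mul_zero]
    rw [hT] at h0
    field_simp at h0
    simpa using h0
  refine ⟨v + c • w', Submodule.add_mem _ hv (Submodule.smul_mem _ _ hw'O), ?_, ?_⟩
  · intro hmem
    apply hw'1
    have h1 : c • w' = (v + c • w') - v := by ring_nf
    have h2 : c • w' ∈ C ⊔ K ∙ v := by
      rw [h1]
      exact Submodule.sub_mem _ (Submodule.mem_sup_left hmem)
        (Submodule.mem_sup_right (Submodule.mem_span_singleton_self v))
    have h3 := Submodule.smul_mem (C ⊔ K ∙ v) c⁻¹ h2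
    rwa [smul_smul, inv_mul_cancel₀ hcne, one_smul] at h3
  · have := hB_expand φ v w' c c
    rw [this, hvw', hw'v, mul_zero, add_zero, mul_zero, add_zero, ← mul_assoc, hc', hT]
    field_simp
    ring
end Main

lemma hB_expand2 {K : Type} [Field K] {n : ℕ} (φ : K →+* K) (x y u : Fin n → K) (a b : K) :
    ∑ i, φ ((x + a • u) i) * (y + b • u) i
      = (∑ i, φ (x i) * y i) + b * (∑ i, φ (x i) * u i)
        + φ a * (∑ i, φ (u i) * y i) + φ a * (b * ∑ i, φ (u i) * u i) := by
  simp only [hB_add_left, hB_add_right, hB_smul_left, hB_smul_right]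
  ring

section Main2
variable {q : ℕ} {K : Type} [Field K] [Fintype K] {n : ℕ}

lemma step_lemma (hq1 : 1 < q) (hK : Fintype.card K = q ^ 2)
    (φ : K →+* K) (hφ : ∀ x, φ x = x ^ q) (hinv : ∀ x : K, φ (φ x) = x)
    (hn : Even n) (C : Submodule K (Fin n → K))
    (hso : ∀ x ∈ C, ∀ y ∈ C, ∑ i, φ (x i) * y i = 0)
    (hlt : Module.finrank K C < n / 2) :
    ∃ C' : Submodule K (Fin n → K), C ≤ C' ∧
      Module.finrank K C' = Module.finrank K C + 1 ∧
      ∀ x ∈ C', ∀ y ∈ C', ∑ i, φ (x i) * y i = 0 := by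
  obtain ⟨k, hk⟩ := hn
  have hCle : C ≤ hOrth φ hinv C := fun x hx =>
    (mem_hOrth φ hinv).mpr fun c hc => hso x hx c hc
  have hfr : finrank K (hOrth φ hinv C) = n - finrank K C := finrank_hOrth φ hinv C
  set d := finrank K C with hd
  have hdn : d + 1 < n - d := by omega
  have hCne : C < hOrth φ hinv C := by
    apply Submodule.lt_of_le_of_finrank_lt_finrank hCle
    omega
  obtain ⟨v, hv, hvC⟩ := SetLike.exists_of_lt hCne
  have hv0 : v ≠ 0 := fun h => hvC (h ▸ C.zero_mem)
  have hC1le : C ⊔ (K ∙ v) ≤ hOrth φ hinv C :=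
    sup_le hCle ((Submodule.span_le).mpr (Set.singleton_subset_iff.mpr hv))
  have hC1fr : finrank K (C ⊔ (K ∙ v) : Submodule K (Fin n → K)) ≤ d + 1 := by
    refine le_trans (Submodule.finrank_add_le_finrank_add_finrank C (K ∙ v)) ?_
    rw [finrank_span_singleton hv0]
  have hC1ne : C ⊔ (K ∙ v) < hOrth φ hinv C := by
    apply Submodule.lt_of_le_of_finrank_lt_finrank hC1le
    omega
  obtain ⟨w, hw, hw1⟩ := SetLike.exists_of_lt hC1ne
  obtain ⟨u, huO, huC, huu⟩ := isotropic hq1 hK φ hφ hinv C hv hw hvC hw1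
  have hu0 : u ≠ 0 := fun h => huC (h ▸ C.zero_mem)
  refine ⟨C ⊔ (K ∙ u), le_sup_left, ?_, ?_⟩
  · have hdisj : Disjoint C (K ∙ u) :=
      (Submodule.disjoint_span_singleton' hu0).mpr huC
    have heq := Submodule.finrank_sup_add_finrank_inf_eq C (K ∙ u)
    rw [hdisj.eq_bot, finrank_bot, add_zero, finrank_span_singleton hu0] at heq
    omega
  · intro x hx y hy
    rw [Submodule.mem_sup] at hx hy
    obtain ⟨cx, hcx, zx, hzx, rfl⟩ := hx
    obtain ⟨cy, hcy, zy, hzy, rfl⟩ := hy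
    rw [Submodule.mem_span_singleton] at hzx hzy
    obtain ⟨a, rfl⟩ := hzx
    obtain ⟨b, rfl⟩ := hzy
    rw [hB_expand2, hso cx hcx cy hcy, (mem_hOrth φ hinv).mp huO cy hcy, huu,
      hB_comm_zero φ hinv ((mem_hOrth φ hinv).mp huO cx hcx)]
    ring
end Main2

section Main3
variable {q : ℕ} {K : Type} [Field K] [Fintype K] {n : ℕ}

lemma extend_lemma (hq1 : 1 < q) (hK : Fintype.card K = q ^ 2)
    (φ : K →+* K) (hφ : ∀ x, φ x = x ^ q) (hinv : ∀ x : K, φ (φ x) = x)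
    (hn : Even n) :
    ∀ m : ℕ, ∀ C : Submodule K (Fin n → K),
      (∀ x ∈ C, ∀ y ∈ C, ∑ i, φ (x i) * y i = 0) →
      n / 2 - Module.finrank K C = m →
      ∃ D, C ≤ D ∧ Module.finrank K D = n / 2 ∧
        ∀ x ∈ D, ∀ y ∈ D, ∑ i, φ (x i) * y i = 0 := by
  intro m
  induction m with
  | zero =>
    intro C hso hm
    obtain ⟨k, hk⟩ := hn
    have hCle : C ≤ hOrth φ hinv C := fun x hx =>
      (mem_hOrth φ hinv).mpr fun c hc => hso x hx c hc
    have hfr : finrank K (hOrth φ hinv C) = n - finrank K C := finrank_hOrth φ hinv C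
    have hle := Submodule.finrank_mono hCle
    rw [hfr] at hle
    exact ⟨C, le_rfl, by omega, hso⟩
  | succ m ih =>
    intro C hso hm
    have hlt : finrank K C < n / 2 := by omega
    obtain ⟨C', hCC', hfr', hso'⟩ := step_lemma hq1 hK φ hφ hinv hn C hso hlt
    obtain ⟨D, hC'D, hfrD, hsoD⟩ := ih C' hso' (by omega)
    exact ⟨D, le_trans hCC' hC'D, hfrD, hsoD⟩
end Main3

/-- every Hermitian self-orthogonal code of even length n over F_{q^2}
is contained in a Hermitian self-dual code (dimension n/2, equal to its own
Hermitian dual). -/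
theorem stmt5 (q : ℕ) (hq : ∃ p e : ℕ, p.Prime ∧ 0 < e ∧ q = p ^ e)
    (K : Type) [Field K] [Fintype K] (hK : Fintype.card K = q ^ 2)
    (n : ℕ) (hn : Even n)
    (C : Submodule K (Fin n → K))
    (hso : ∀ x ∈ C, ∀ y ∈ C, ∑ i, (x i) ^ q * y i = 0) :
    ∃ D : Submodule K (Fin n → K), C ≤ D ∧ Module.finrank K D = n / 2 ∧
      (∀ x ∈ D, ∀ y ∈ D, ∑ i, (x i) ^ q * y i = 0) ∧
      (∀ x : Fin n → K, (∀ c ∈ D, ∑ i, (x i) ^ q * c i = 0) → x ∈ D) := by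
  have hq1 : 1 < q := by
    obtain ⟨p, e, hp, he, rfl⟩ := hq
    calc 1 < p := hp.one_lt
    _ ≤ p ^ e := Nat.le_self_pow (by omega) p
  obtain ⟨φ, hφ⟩ := exists_pow_hom hq hK
  have hinv : ∀ x : K, φ (φ x) = x := by
    intro x
    rw [hφ, hφ, ← pow_mul, ← sq, ← hK]
    exact FiniteField.pow_card x
  have hso' : ∀ x ∈ C, ∀ y ∈ C, ∑ i, φ (x i) * y i = 0 := by
    intro x hx y hy
    simpa [hφ] using hso x hx y hy
  obtain ⟨D, hCD, hfrD, hsoD⟩ :=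
    extend_lemma hq1 hK φ hφ hinv hn (n / 2 - Module.finrank K C) C hso' rfl
  have hDperp : D = hOrth φ hinv D := by
    have hDle : D ≤ hOrth φ hinv D := fun x hx =>
      (mem_hOrth φ hinv).mpr fun c hc => hsoD x hx c hc
    have hfr : finrank K (hOrth φ hinv D) = n - finrank K D := finrank_hOrth φ hinv D
    obtain ⟨k, hk⟩ := hn
    exact Submodule.eq_of_le_of_finrank_le hDle (by omega)
  refine ⟨D, hCD, hfrD, ?_, ?_⟩
  · intro x hx y hy
    simpa [← hφ] using hsoD x hx y hy
  · intro x hx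
    rw [hDperp]
    exact (mem_hOrth φ hinv).mpr fun c hc => by simpa [hφ] using hx c hc
end

section
/- Let C be a Hermitian self-orthogonal code of odd length n over F_{q^2}. Then C is contained in a Hermitian self-orthogonal code of dimension (n-1)/2. -/
lemma stmt6_norm_surj {K : Type} [Field K] [Fintype K] {q : ℕ} (hq2 : 2 ≤ q)
    (hK : Fintype.card K = q ^ 2) (a : K) (ha : a ^ q = a) :
    ∃ t : K, t ^ (q + 1) = a := by
  classical
  rcases eq_or_ne a 0 with rfl | ha0
  · exact ⟨0, by simp [pow_succ]⟩
  obtain ⟨g, hg⟩ := IsCyclic.exists_generator (α := Kˣ)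
  have hord : orderOf g = q ^ 2 - 1 := by
    rw [orderOf_eq_card_of_forall_mem_zpowers hg, Nat.card_eq_fintype_card,
      Fintype.card_units, hK]
  set u : Kˣ := Units.mk0 a ha0 with hu
  obtain ⟨k, hk⟩ := (mem_powers_iff_mem_zpowers.mpr (hg u))
  simp only at hk
  have hu1 : u ^ (q - 1) = 1 := by
    ext
    push_cast
    have h2 : a ^ (q - 1) * a = a := by
      rw [← pow_succ]
      have h3 : q - 1 + 1 = q := by omega
      rw [h3, ha]
    field_simp at h2
    simpa [hu] using h2
  have hdvd : (q ^ 2 - 1) ∣ k * (q - 1) := by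
    rw [← hord]
    apply orderOf_dvd_of_pow_eq_one
    rw [pow_mul, hk, hu1]
  have hfac : q ^ 2 - 1 = (q + 1) * (q - 1) := by
    have := Nat.sq_sub_sq q 1
    simpa using this
  have hdvd2 : (q + 1) ∣ k := by
    rw [hfac] at hdvd
    have h1 : 0 < q - 1 := by omega
    exact (Nat.mul_dvd_mul_iff_right h1).mp (by rwa [Nat.mul_comm k] at hdvd ⊢)
  obtain ⟨m, rfl⟩ := hdvd2
  refine ⟨(g : K) ^ m, ?_⟩
  have h4 : (g ^ m) ^ (q + 1) = u := by rw [← hk, ← pow_mul, Nat.mul_comm]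
  calc ((g:K) ^ m) ^ (q+1) = ((g ^ m : Kˣ) ^ (q+1) : Kˣ) := by push_cast; ring
    _ = a := by rw [h4]; simp [hu]


open Module LinearMap

lemma stmt6_orth_dim {K : Type} [Field K] [Fintype K] {q n : ℕ} (hq0 : 0 < q)
    (hinv : ∀ x : K, (x ^ q) ^ q = x)
    (hadd : ∀ x y : K, (x + y) ^ q = x ^ q + y ^ q)
    (C : Submodule K (Fin n → K)) :
    ∃ W : Submodule K (Fin n → K),
      (∀ y, y ∈ W ↔ ∀ x ∈ C, ∑ i, (x i) ^ q * y i = 0) ∧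
      finrank K W = n - finrank K C := by
  set B : LinearMap.BilinForm K (Fin n → K) :=
    LinearMap.mk₂ K (fun x y => ∑ i, x i * y i)
      (fun x x' y => by simp [add_mul, Finset.sum_add_distrib])
      (fun a x y => by simp [Finset.mul_sum, mul_assoc])
      (fun x y y' => by simp [mul_add, Finset.sum_add_distrib])
      (fun a x y => by simp only [Pi.smul_apply, smul_eq_mul, Finset.mul_sum]; exact Finset.sum_congr rfl fun i _ => by ring) with hB
  have hBapp : ∀ x y : Fin n → K, B x y = ∑ i, x i * y i := fun x y => rfl
  have hBrefl : B.IsRefl := by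
    intro x y h
    rw [hBapp] at h ⊢
    simpa [mul_comm] using h
  have hBnd : B.Nondegenerate := by
    refine (LinearMap.IsRefl.nondegenerate_iff_separatingLeft hBrefl).mpr ?_
    intro m hm
    funext j
    have := hm (Pi.single j 1)
    rw [hBapp] at this
    simpa [Pi.single_apply, mul_ite, Finset.sum_ite_eq'] using this
  -- the semilinear (frobenius-twist) additive equivalence
  set φ : (Fin n → K) ≃+ (Fin n → K) :=
    { toFun := fun x i => (x i) ^ q
      invFun := fun x i => (x i) ^ q
      left_inv := fun x => funext fun i => hinv (x i)
      right_inv := fun x => funext fun i => hinv (x i)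
      map_add' := fun x y => funext fun i => hadd (x i) (y i) } with hφ
  have hφapp : ∀ (x : Fin n → K) i, φ x i = (x i) ^ q := fun x i => rfl
  set C' : Submodule K (Fin n → K) :=
    { carrier := φ '' C
      add_mem' := by
        rintro _ _ ⟨x, hx, rfl⟩ ⟨y, hy, rfl⟩
        exact ⟨x + y, C.add_mem hx hy, by rw [map_add]⟩
      zero_mem' := ⟨0, C.zero_mem, by simpa using (map_zero φ)⟩
      smul_mem' := by
        rintro r _ ⟨x, hx, rfl⟩
        refine ⟨(r ^ q) • x, C.smul_mem _ hx, funext fun i => ?_⟩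
        simp only [hφapp, Pi.smul_apply, smul_eq_mul, mul_pow, hinv r] } with hC'
  have hmemC' : ∀ v, v ∈ C' ↔ ∃ x ∈ C, φ x = v := fun v => Iff.rfl
  refine ⟨B.orthogonal C', fun y => ?_, ?_⟩
  · rw [LinearMap.BilinForm.mem_orthogonal_iff]
    constructor
    · intro h x hx
      have := h (φ x) ⟨x, hx, rfl⟩
      rw [hBapp] at this
      simpa [hφapp] using this
    · rintro h _ ⟨x, hx, rfl⟩
      rw [hBapp]
      simpa [hφapp] using h x hx
  · have hC'rank : finrank K C' = finrank K C := by
      have hrk : Module.rank K C = Module.rank K C' := by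
        refine rank_eq_of_equiv_equiv (ZeroHom.mk (fun r : K => r ^ q) (zero_pow hq0.ne'))
          ?_ ?_ ?_
        · exact
          { toFun := fun x => ⟨φ x, ⟨x.1, x.2, rfl⟩⟩
            invFun := fun y => ⟨φ y.1, by
              obtain ⟨x, hx, hxe⟩ := y.2
              rw [← hxe]
              have h2 : φ (φ x) = x := funext fun i => hinv _
              rw [h2]; exact hx⟩
            left_inv := fun x => Subtype.ext (funext fun i => hinv _)
            right_inv := fun y => Subtype.ext (funext fun i => hinv _)
            map_add' := fun x y => Subtype.ext (map_add φ _ _) }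
        · constructor
          · intro a b hab
            have := congrArg (fun z : K => z ^ q) hab
            simpa [hinv] using this
          · intro b
            exact ⟨b ^ q, hinv b⟩
        · intro r m
          refine Subtype.ext (funext fun i => ?_)
          exact mul_pow r ((m : Fin n → K) i) q
      simp only [Module.finrank]
      rw [hrk]
    rw [LinearMap.BilinForm.finrank_orthogonal hBnd C', hC'rank,
      Module.finrank_fin_fun]

open Module


lemma stmt6_key {K : Type} [Field K] [Fintype K] {q n : ℕ} (hq2 : 2 ≤ q)
    (hK : Fintype.card K = q ^ 2)
    (hinv : ∀ x : K, (x ^ q) ^ q = x)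
    (hadd : ∀ x y : K, (x + y) ^ q = x ^ q + y ^ q)
    (hn : Odd n) :
    ∀ d : ℕ, ∀ C : Submodule K (Fin n → K),
      (∀ x ∈ C, ∀ y ∈ C, ∑ i, (x i) ^ q * y i = 0) →
      Module.finrank K C + d = (n - 1) / 2 →
      ∃ D : Submodule K (Fin n → K), C ≤ D ∧ Module.finrank K D = (n - 1) / 2 ∧
        ∀ x ∈ D, ∀ y ∈ D, ∑ i, (x i) ^ q * y i = 0 := by
  have hq0 : 0 < q := by omega
  -- abbreviation for the Hermitian pairing
  set S : (Fin n → K) → (Fin n → K) → K := fun x y => ∑ i, (x i) ^ q * y i with hS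
  have hneg : ∀ u : K, (-u) ^ q = -(u ^ q) := by
    intro u
    have h := hadd u (-u)
    simp only [add_neg_cancel, zero_pow hq0.ne'] at h
    linear_combination -h
  have hpowsum : ∀ (f : Fin n → K), (∑ i, f i) ^ q = ∑ i, (f i) ^ q := by
    intro f
    classical
    induction (Finset.univ : Finset (Fin n)) using Finset.cons_induction with
    | empty => simp [zero_pow hq0.ne']
    | cons a s ha ih => rw [Finset.sum_cons, Finset.sum_cons, hadd, ih]
  have hconj : ∀ x y, (S x y) ^ q = S y x := by
    intro x y
    rw [hS]
    simp only
    rw [hpowsum]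
    refine Finset.sum_congr rfl fun i _ => ?_
    rw [mul_pow, hinv (x i), mul_comm]
  have hSaddl : ∀ x x' y, S (x + x') y = S x y + S x' y := by
    intro x x' y
    simp only [hS, Pi.add_apply, hadd, add_mul, Finset.sum_add_distrib]
  have hSsmull : ∀ (a : K) x y, S (a • x) y = a ^ q * S x y := by
    intro a x y
    simp only [hS, Pi.smul_apply, smul_eq_mul, mul_pow, Finset.mul_sum, mul_assoc]
  have hSaddr : ∀ x y y', S x (y + y') = S x y + S x y' := by
    intro x y y'
    simp only [hS, Pi.add_apply, mul_add, Finset.sum_add_distrib]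
  have hSsmulr : ∀ (a : K) x y, S x (a • y) = a * S x y := by
    intro a x y
    simp only [hS, Pi.smul_apply, smul_eq_mul, Finset.mul_sum]
    exact Finset.sum_congr rfl fun i _ => by ring
  have hSsubr : ∀ x y y', S x (y - y') = S x y - S x y' := by
    intro x y y'
    simp only [hS, Pi.sub_apply, mul_sub, Finset.sum_sub_distrib]
  have hn2 : n = 2 * ((n - 1) / 2) + 1 := by
    obtain ⟨m, hm⟩ := hn; omega
  intro d
  induction d with
  | zero =>
    intro C hso hd
    exact ⟨C, le_rfl, by omega, hso⟩
  | succ d ih =>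
    intro C hso hd
    obtain ⟨W, hWmem, hWrank⟩ := stmt6_orth_dim hq0 hinv hadd C
    have hCW : C ≤ W := fun c hc => (hWmem c).mpr fun x hx => hso x hx c hc
    set k := Module.finrank K C with hk
    have hWn : Module.finrank K W ≤ n := by
      have := Submodule.finrank_le W
      rwa [Module.finrank_fin_fun] at this
    have hkW : k ≤ Module.finrank K W := Submodule.finrank_mono hCW
    have hkn : 2 * k + 3 ≤ n := by omega
    have hWrk : Module.finrank K W = n - k := hWrank
    -- find x ∈ W \ C
    have hltCW : C < W := by
      refine lt_of_le_of_ne hCW fun h => ?_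
      rw [h] at hk
      omega
    obtain ⟨x, hxW, hxC⟩ := SetLike.exists_of_lt hltCW
    -- Claim: there is an isotropic vector in W \ C
    have claim : ∃ v, v ∈ W ∧ v ∉ C ∧ S v v = 0 := by
      by_cases hxx : S x x = 0
      · exact ⟨x, hxW, hxC, hxx⟩
      · set a := S x x with ha
        have hx0 : x ≠ 0 := fun h => hxC (h ▸ C.zero_mem)
        set U := C ⊔ (K ∙ x) with hU
        have hxU : x ∈ U := Submodule.mem_sup_right (Submodule.mem_span_singleton_self x)
        have hCU : C ≤ U := le_sup_left
        have hUW : U ≤ W := sup_le hCW ((Submodule.span_singleton_le_iff_mem x W).mpr hxW)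
        have hUrank : Module.finrank K U ≤ k + 1 := by
          have h1 := Submodule.finrank_sup_add_finrank_inf_eq C (K ∙ x)
          have h2 : Module.finrank K (K ∙ x) = 1 := finrank_span_singleton hx0
          rw [← hU] at h1
          omega
        have hltUW : U < W := by
          refine lt_of_le_of_ne hUW fun h => ?_
          rw [h] at hUrank
          omega
        obtain ⟨y, hyW, hyU⟩ := SetLike.exists_of_lt hltUW
        set b := S x y with hb
        set y' := y - (b / a) • x with hy'
        have hy'W : y' ∈ W := W.sub_mem hyW (W.smul_mem _ hxW)
        have hy'U : y' ∉ U := by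
          intro h
          apply hyU
          have : y = y' + (b / a) • x := by rw [hy']; abel
          rw [this]
          exact U.add_mem h (U.smul_mem _ hxU)
        have hxy' : S x y' = 0 := by
          rw [hy', hSsubr, hSsmulr, ← hb, ← ha]
          field_simp
          ring
        by_cases hcc : S y' y' = 0
        · exact ⟨y', hy'W, fun h => hy'U (hCU h), hcc⟩
        · set c := S y' y' with hc
          have haq : a ^ q = a := by rw [ha, hconj]
          have hcq : c ^ q = c := by rw [hc, hconj]
          have hr : (-(a / c)) ^ q = -(a / c) := by
            rw [hneg, div_pow, haq, hcq]
          obtain ⟨t, ht⟩ := stmt6_norm_surj hq2 hK (-(a / c)) hr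
          have ht0 : t ≠ 0 := by
            intro h
            rw [h, zero_pow (by omega : q + 1 ≠ 0)] at ht
            have : a = 0 := by
              field_simp at ht
              linear_combination ht
            exact hxx this
          refine ⟨x + t • y', W.add_mem hxW (W.smul_mem _ hy'W), ?_, ?_⟩
          · intro h
            apply hy'U
            have hvx : t • y' = (x + t • y') - x := by abel
            have hmem : (x + t • y') - x ∈ U := U.sub_mem (hCU h) hxU
            rw [← hvx] at hmem
            have := U.smul_mem t⁻¹ hmem
            rwa [smul_smul, inv_mul_cancel₀ ht0, one_smul] at this
          · have hy'x : S y' x = 0 := by rw [← hconj, hxy', zero_pow hq0.ne']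
            have hexp : S (x + t • y') (x + t • y') =
                S x x + t * S x y' + t ^ q * S y' x + t ^ q * (t * S y' y') := by
              simp only [hSaddl, hSaddr, hSsmull, hSsmulr]
              ring
            rw [hexp, hxy', hy'x, ← ha, ← hc]
            have h5 : t ^ q * (t * c) = -(a / c) * c := by
              rw [← mul_assoc, ← pow_succ, ht]
            rw [h5, mul_zero, mul_zero, add_zero, add_zero]
            field_simp
            ring
    obtain ⟨v, hvW, hvC, hvv⟩ := claim
    have hv0 : v ≠ 0 := fun h => hvC (h ▸ C.zero_mem)
    set D₁ := C ⊔ (K ∙ v) with hD₁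
    have hCD₁ : C ≤ D₁ := le_sup_left
    have hvD₁ : v ∈ D₁ := Submodule.mem_sup_right (Submodule.mem_span_singleton_self v)
    have hinf : C ⊓ (K ∙ v) = ⊥ := by
      rw [eq_bot_iff]
      rintro z ⟨hzC, hzS⟩
      obtain ⟨r, rfl⟩ := Submodule.mem_span_singleton.mp hzS
      rcases eq_or_ne r 0 with rfl | hr0
      · simp
      · exfalso
        apply hvC
        have := C.smul_mem r⁻¹ hzC
        rwa [smul_smul, inv_mul_cancel₀ hr0, one_smul] at this
    have hD₁rank : Module.finrank K ↥(C ⊔ (K ∙ v)) = k + 1 := by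
      have h1 := Submodule.finrank_sup_add_finrank_inf_eq C (K ∙ v)
      have h2 : Module.finrank K (K ∙ v) = 1 := finrank_span_singleton hv0
      rw [hinf] at h1
      simp only [finrank_bot] at h1
      omega
    have hCv : ∀ z ∈ C, S z v = 0 := fun z hz => (hWmem v).mp hvW z hz
    have hvCp : ∀ z ∈ C, S v z = 0 := by
      intro z hz
      rw [← hconj, hCv z hz, zero_pow hq0.ne']
    have hD₁so : ∀ z ∈ D₁, ∀ w ∈ D₁, S z w = 0 := by
      intro z hz w hw
      rw [hD₁, Submodule.mem_sup] at hz hw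
      obtain ⟨u, hu, s, hs, rfl⟩ := hz
      obtain ⟨r, rfl⟩ := Submodule.mem_span_singleton.mp hs
      obtain ⟨u', hu', s', hs', rfl⟩ := hw
      obtain ⟨r', rfl⟩ := Submodule.mem_span_singleton.mp hs'
      have hexp2 : S (u + r • v) (u' + r' • v) =
          S u u' + r' * S u v + r ^ q * S v u' + r ^ q * (r' * S v v) := by
        simp only [hSaddl, hSaddr, hSsmull, hSsmulr]
        ring
      have h7 : S u u' = 0 := hso u hu u' hu'
      rw [hexp2, h7, hCv u hu, hvCp u' hu', hvv]
      ring
    have hgoal : Module.finrank K ↥(C ⊔ (K ∙ v)) + d = (n - 1) / 2 := by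
      omega
    obtain ⟨D, hD₁D, hDrank, hDso⟩ := ih D₁ hD₁so hgoal
    exact ⟨D, le_trans hCD₁ hD₁D, hDrank, hDso⟩


/-- every Hermitian self-orthogonal code of odd length n over F_{q^2}
is contained in a Hermitian self-orthogonal code of dimension (n-1)/2. -/
theorem stmt6 (q : ℕ) (hq : ∃ p e : ℕ, p.Prime ∧ 0 < e ∧ q = p ^ e)
    (K : Type) [Field K] [Fintype K] (hK : Fintype.card K = q ^ 2)
    (n : ℕ) (hn : Odd n)
    (C : Submodule K (Fin n → K))
    (hso : ∀ x ∈ C, ∀ y ∈ C, ∑ i, (x i) ^ q * y i = 0) :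
    ∃ D : Submodule K (Fin n → K), C ≤ D ∧ Module.finrank K D = (n - 1) / 2 ∧
      ∀ x ∈ D, ∀ y ∈ D, ∑ i, (x i) ^ q * y i = 0 := by
  obtain ⟨p, e, hp, he, rfl⟩ := hq
  have hq2 : 2 ≤ p ^ e := by
    calc 2 ≤ p := hp.two_le
    _ = p ^ 1 := (pow_one p).symm
    _ ≤ p ^ e := Nat.pow_le_pow_right hp.one_lt.le he
  have hq0 : 0 < p ^ e := by omega
  -- characteristic of K is p
  haveI : Fact p.Prime := ⟨hp⟩
  have hcharK : CharP K p := by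
    have hrc : CharP K (ringChar K) := ringChar.charP K
    have hrp : (ringChar K).Prime := CharP.char_is_prime K (ringChar K)
    obtain ⟨m, _, hcard⟩ := FiniteField.card K (ringChar K)
    have hdvd : ringChar K ∣ p := by
      have h1 : ringChar K ∣ (p ^ e) ^ 2 := by
        rw [← hK, hcard]
        exact dvd_pow_self _ (by positivity)
      exact hrp.dvd_of_dvd_pow (by rwa [← pow_mul] at h1)
    have : ringChar K = p := ((Nat.prime_dvd_prime_iff_eq hrp hp).mp hdvd)
    rwa [this] at hrc
  haveI : CharP K p := hcharK
  haveI : ExpChar K p := ExpChar.prime hp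
  have hadd : ∀ x y : K, (x + y) ^ p ^ e = x ^ p ^ e + y ^ p ^ e := fun x y =>
    add_pow_char_pow x y p e
  have hinv : ∀ x : K, (x ^ p ^ e) ^ p ^ e = x := by
    intro x
    rw [← pow_mul, ← sq, ← hK]
    exact FiniteField.pow_card x
  -- bound on the dimension of C
  obtain ⟨W, hWmem, hWrank⟩ := stmt6_orth_dim hq0 hinv hadd C
  have hCW : C ≤ W := fun c hc => (hWmem c).mpr fun x hx => hso x hx c hc
  have hkW : Module.finrank K C ≤ Module.finrank K W := Submodule.finrank_mono hCW
  have hWn : Module.finrank K W ≤ n := by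
    have := Submodule.finrank_le W
    rwa [Module.finrank_fin_fun] at this
  have hn2 : n = 2 * ((n - 1) / 2) + 1 := by obtain ⟨m, hm⟩ := hn; omega
  have hbound : Module.finrank K C ≤ (n - 1) / 2 := by omega
  exact stmt6_key hq2 hK hinv hadd hn ((n - 1) / 2 - Module.finrank K C) C hso (by omega)
end

section
/- Let q = p^m with p an odd prime, and let C be a k-dimensional Euclidean self-orthogonal subspace of F_q^n with n ≥ 2k+3. Then there exists a (k+1)-dimensional Euclidean self-orthogonal subspace C' of F_q^n containing C. -/
open Module MvPolynomial

section aux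

variable {F : Type} [Field F] {n : ℕ}

/-- the map sending v to the functional c ↦ ⟨v,c⟩ on C -/
noncomputable def gmap (C : Submodule F (Fin n → F)) :
    (Fin n → F) →ₗ[F] (C →ₗ[F] F) where
  toFun v :=
    { toFun := fun c => ∑ i, v i * (c : Fin n → F) i
      map_add' := by
        intro c c'
        simp [mul_add, Finset.sum_add_distrib]
      map_smul' := by
        intro a c
        simp [Finset.mul_sum, mul_left_comm] }
  map_add' v w := by
    ext c
    simp [add_mul, Finset.sum_add_distrib]
  map_smul' a v := by
    ext c
    simp [Finset.mul_sum, mul_assoc]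

lemma mem_ker_gmap (C : Submodule F (Fin n → F)) (v : Fin n → F) :
    v ∈ LinearMap.ker (gmap C) ↔ ∀ c ∈ C, ∑ i, v i * c i = 0 := by
  constructor
  · intro h c hc
    have := LinearMap.congr_fun (LinearMap.mem_ker.mp h) ⟨c, hc⟩
    simpa [gmap] using this
  · intro h
    rw [LinearMap.mem_ker]
    ext c
    simpa [gmap] using h c c.2

end aux

/-- over F_q with q = p^m, p an odd prime, every k-dimensional Euclidean
self-orthogonal subspace of F_q^n with n ≥ 2k+3 extends to a (k+1)-dimensional one. -/
theorem stmt8 (p m : ℕ) (hp : p.Prime) (hodd : Odd p) (hm : 0 < m)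
    (F : Type) [Field F] [Fintype F] (hF : Fintype.card F = p ^ m)
    (n k : ℕ) (hn : n ≥ 2 * k + 3)
    (C : Submodule F (Fin n → F)) (hdim : Module.finrank F C = k)
    (hso : ∀ x ∈ C, ∀ y ∈ C, ∑ i, x i * y i = 0) :
    ∃ C' : Submodule F (Fin n → F), C ≤ C' ∧ Module.finrank F C' = k + 1 ∧
      ∀ x ∈ C', ∀ y ∈ C', ∑ i, x i * y i = 0 := by
  classical
  -- characteristic
  have hchar : CharP F p := by
    obtain ⟨r, hr, hcard⟩ := FiniteField.card F (ringChar F)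
    have : ringChar F = p := by
      have hdvd : ringChar F ∣ p ^ m := by
        rw [← hF, hcard]
        exact dvd_pow_self _ r.ne_zero
      exact ((Nat.prime_dvd_prime_iff_eq hr hp).mp (hr.dvd_of_dvd_pow hdvd))
    exact this ▸ ringChar.charP F
  -- the orthogonal space W of C
  set W : Submodule F (Fin n → F) := LinearMap.ker (gmap C) with hW
  have hmemW : ∀ v, v ∈ W ↔ ∀ c ∈ C, ∑ i, v i * c i = 0 := mem_ker_gmap C
  have hCW : C ≤ W := fun c hc => (hmemW c).mpr (fun c' hc' => hso c hc c' hc')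
  have hdimW : Module.finrank F W ≥ n - k := by
    have h1 := LinearMap.finrank_range_add_finrank_ker (gmap (F := F) C)
    have h2 : Module.finrank F (LinearMap.range (gmap (F := F) C)) ≤ k := by
      calc Module.finrank F (LinearMap.range (gmap (F := F) C))
          ≤ Module.finrank F (C →ₗ[F] F) := Submodule.finrank_le _
        _ = Module.finrank F C := Subspace.dual_finrank_eq
        _ = k := hdim
    have h3 : Module.finrank F (Fin n → F) = n := by simp
    have h4 : Module.finrank F W = Module.finrank F (LinearMap.ker (gmap (F := F) C)) := rfl
    omega
  -- complement U of C inside W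
  have hCin : (C.comap W.subtype).map W.subtype = C := by
    rw [Submodule.map_comap_subtype]
    exact inf_eq_right.mpr hCW
  obtain ⟨U', hU'⟩ := Submodule.exists_isCompl (C.comap W.subtype)
  set U : Submodule F (Fin n → F) := U'.map W.subtype with hU
  have hUW : U ≤ W := by
    rintro x ⟨y, -, rfl⟩; exact y.2
  have hdisj : ∀ x, x ∈ U → x ∈ C → x = 0 := by
    rintro x ⟨y, hy, rfl⟩ hxC
    have hy' : y ∈ C.comap W.subtype := by simpa using hxC
    have : y = 0 := by
      have := hU'.inf_eq_bot
      have hmem : y ∈ U' ⊓ C.comap W.subtype := ⟨hy, hy'⟩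
      rw [inf_comm, this] at hmem
      simpa using hmem
    simp [this]
  have hdimC' : Module.finrank F (C.comap W.subtype) = k := by
    have := Submodule.finrank_map_subtype_eq W (C.comap W.subtype)
    rw [hCin] at this
    omega
  have hdimU : Module.finrank F U ≥ 3 := by
    have h1 := Submodule.finrank_add_eq_of_isCompl hU'.symm
    have h2 : Module.finrank F U = Module.finrank F U' :=
      Submodule.finrank_map_subtype_eq W U'
    omega
  -- Chevalley-Warning: find isotropic vector in U
  set d := Module.finrank F U with hd
  have : FiniteDimensional F U := inferInstance
  let b : Basis (Fin d) F U := Module.finBasis F U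
  let P : MvPolynomial (Fin d) F :=
    ∑ i : Fin n, (∑ j, MvPolynomial.C ((b j : Fin n → F) i) * MvPolynomial.X j) ^ 2
  have hPdeg : P.totalDegree < Fintype.card (Fin d) := by
    have h2 : P.totalDegree ≤ 2 := by
      apply le_trans (MvPolynomial.totalDegree_finset_sum _ _)
      apply Finset.sup_le
      intro i _
      apply le_trans (MvPolynomial.totalDegree_pow _ _)
      have : (∑ j, MvPolynomial.C ((b j : Fin n → F) i) * MvPolynomial.X j).totalDegree ≤ 1 := by
        apply le_trans (MvPolynomial.totalDegree_finset_sum _ _)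
        apply Finset.sup_le
        intro j _
        apply le_trans (MvPolynomial.totalDegree_mul _ _)
        simp [MvPolynomial.totalDegree_C, MvPolynomial.totalDegree_X]
      omega
    simp only [Fintype.card_fin]
    omega
  have hdvd := char_dvd_card_solutions p hPdeg
  have hx : ∃ x : Fin d → F, x ≠ 0 ∧ MvPolynomial.eval x P = 0 := by
    by_contra h
    push_neg at h
    have hcard1 : Fintype.card { x : (Fin d) → F // MvPolynomial.eval x P = 0 } ≤ 1 := by
      rw [Fintype.card_le_one_iff]
      rintro ⟨x, hx⟩ ⟨y, hy⟩
      have hx0 : x = 0 := by by_contra hx0; exact (h x hx0 hx).elim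
      have hy0 : y = 0 := by by_contra hy0; exact (h y hy0 hy).elim
      simp [hx0, hy0]
    have hcard0 : 0 < Fintype.card { x : (Fin d) → F // MvPolynomial.eval x P = 0 } := by
      rw [Fintype.card_pos_iff]
      refine ⟨⟨0, ?_⟩⟩
      simp [P]
    have := Nat.le_of_dvd hcard0 hdvd
    have := hp.two_le
    omega
  obtain ⟨x, hx0, hxP⟩ := hx
  -- the isotropic vector v
  set u : U := ∑ j, x j • b j with hu
  set v : Fin n → F := (u : Fin n → F) with hv
  have hvU : v ∈ U := u.2
  have hvW : v ∈ W := hUW hvU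
  have hvne : v ≠ 0 := by
    intro hv0
    rw [hv, Submodule.coe_eq_zero] at hv0
    have h1 : b.equivFun.symm x = 0 := by rwa [b.equivFun_symm_apply]
    have h2 : b.equivFun.symm x = b.equivFun.symm 0 := by rw [h1, map_zero]
    exact hx0 (b.equivFun.symm.injective h2)
  have hvi : ∀ i, v i = ∑ j, x j * (b j : Fin n → F) i := by
    intro i
    rw [hv, hu]
    push_cast
    simp [Finset.sum_apply]
  have hvv : ∑ i, v i * v i = 0 := by
    rw [← hxP]
    simp only [P, map_sum, map_pow, map_mul, MvPolynomial.eval_C, MvPolynomial.eval_X, sq]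
    refine Finset.sum_congr rfl fun i _ => ?_
    have hfac : ∑ j, (b j : Fin n → F) i * x j = v i := by
      rw [hvi i]; exact Finset.sum_congr rfl fun j _ => mul_comm _ _
    rw [hfac]
  have hvC : ∀ c ∈ C, ∑ i, v i * c i = 0 := (hmemW v).mp hvW
  have hCv : ∀ c ∈ C, ∑ i, c i * v i = 0 := by
    intro c hc
    rw [← hvC c hc]
    exact Finset.sum_congr rfl fun i _ => mul_comm _ _
  have hvnotC : v ∉ C := fun hvc => hvne (hdisj v hvU hvc)
  -- construct C'
  refine ⟨C ⊔ Submodule.span F {v}, le_sup_left, ?_, ?_⟩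
  · have hinf : C ⊓ Submodule.span F {v} = ⊥ := by
      rw [Submodule.eq_bot_iff]
      rintro w ⟨hwC, hwv⟩
      obtain ⟨a, rfl⟩ := Submodule.mem_span_singleton.mp hwv
      rcases eq_or_ne a 0 with rfl | ha
      · simp
      · exfalso
        apply hvnotC
        have : v = a⁻¹ • (a • v) := by rw [smul_smul, inv_mul_cancel₀ ha, one_smul]
        rw [this]
        exact C.smul_mem _ hwC
    have := Submodule.finrank_sup_add_finrank_inf_eq C (Submodule.span F {v})
    rw [hinf, hdim, finrank_span_singleton hvne] at this
    simpa using this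
  · intro x' hx' y' hy'
    obtain ⟨c, hc, s, hs, rfl⟩ := Submodule.mem_sup.mp hx'
    obtain ⟨c', hc', s', hs', rfl⟩ := Submodule.mem_sup.mp hy'
    obtain ⟨a, rfl⟩ := Submodule.mem_span_singleton.mp hs
    obtain ⟨a', rfl⟩ := Submodule.mem_span_singleton.mp hs'
    have expand : ∀ i, (c + a • v) i * (c' + a' • v) i =
        c i * c' i + a' * (c i * v i) + a * (v i * c' i) + (a * a') * (v i * v i) := by
      intro i
      simp [Pi.add_apply, Pi.smul_apply, smul_eq_mul]
      ring
    simp only [expand, Finset.sum_add_distrib, ← Finset.mul_sum]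
    rw [hso c hc c' hc', hvC c' hc', hCv c hc, hvv]
    ring
end

section
/- Let q = 2^m, and let C be a k-dimensional Euclidean self-orthogonal subspace of F_q^n with n ≥ 2k+2. Then there exists a (k+1)-dimensional Euclidean self-orthogonal subspace C' of F_q^n containing C. -/
open Module Finset LinearMap

/-- over F_q with q = 2^m, every k-dimensional Euclidean self-orthogonal
subspace of F_q^n with n ≥ 2k+2 extends to a (k+1)-dimensional one. -/
theorem stmt9 (m : ℕ) (hm : 0 < m)
    (F : Type) [Field F] [Fintype F] (hF : Fintype.card F = 2 ^ m)
    (n k : ℕ) (hn : n ≥ 2 * k + 2)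
    (C : Submodule F (Fin n → F)) (hdim : Module.finrank F C = k)
    (hso : ∀ x ∈ C, ∀ y ∈ C, ∑ i, x i * y i = 0) :
    ∃ C' : Submodule F (Fin n → F), C ≤ C' ∧ Module.finrank F C' = k + 1 ∧
      ∀ x ∈ C', ∀ y ∈ C', ∑ i, x i * y i = 0 := by
  classical
  have hchar : CharP F 2 := ringChar.of_eq <| by
    rw [FiniteField.even_card_iff_char_two, hF]
    have : (2:ℕ) ∣ 2 ^ m := dvd_pow_self 2 hm.ne'
    omega
  haveI : ExpChar F 2 := .prime Nat.prime_two
  have hsq : ∀ v : Fin n → F, ∑ i, v i * v i = (∑ i, v i) ^ 2 := by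
    intro v
    rw [sum_pow_char (p := 2)]
    simp [sq]
  -- the dot product bilinear form
  set b : LinearMap.BilinForm F (Fin n → F) :=
    LinearMap.mk₂ F (fun x y => ∑ i, x i * y i)
      (fun x x' y => by simp [add_mul, Finset.sum_add_distrib])
      (fun a x y => by simp [Finset.mul_sum, mul_assoc])
      (fun x y y' => by simp [mul_add, Finset.sum_add_distrib])
      (fun a x y => by simp [Finset.mul_sum]; ring_nf; simp [mul_assoc, mul_comm, mul_left_comm])
    with hb
  have hbapp : ∀ x y, b x y = ∑ i, x i * y i := fun x y => rfl
  have hbsymm : ∀ x y, b x y = b y x := by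
    intro x y; simp only [hbapp]; exact Finset.sum_congr rfl fun i _ => mul_comm _ _
  have hrefl : b.IsRefl := fun x y h => by rw [← hbsymm]; exact h
  have hnd : b.Nondegenerate := by
    refine (LinearMap.IsRefl.nondegenerate_iff_separatingLeft hrefl).mpr ?_
    intro x hx
    funext i
    have := hx (Pi.single i 1)
    simpa [hbapp, Pi.single_apply, mul_ite] using this
  -- the sum functional
  set s : (Fin n → F) →ₗ[F] F := ∑ i, LinearMap.proj i with hs
  have hsapp : ∀ v : Fin n → F, s v = ∑ i, v i := by
    intro v; simp [hs]
  have hself : ∀ v : Fin n → F, b v v = (s v) ^ 2 := by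
    intro v; rw [hbapp, hsapp, hsq]
  have hN : finrank F (Fin n → F) = n := by simp
  -- dimension counts
  have horth : finrank F (b.orthogonal C) = n - k := by
    rw [LinearMap.BilinForm.finrank_orthogonal hnd, hN, hdim]
  have hker : finrank F (LinearMap.ker s) ≥ n - 1 := by
    have h1 := LinearMap.finrank_range_add_finrank_ker s
    have h2 : finrank F (LinearMap.range s) ≤ 1 := by
      simpa using Submodule.finrank_le (LinearMap.range s)
    rw [hN] at h1; omega
  set W : Submodule F (Fin n → F) := b.orthogonal C ⊓ LinearMap.ker s with hW
  have hWrank : finrank F W ≥ k + 1 := by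
    have h1 := Submodule.finrank_sup_add_finrank_inf_eq (b.orthogonal C) (LinearMap.ker s)
    have h2 : finrank F ↥(b.orthogonal C ⊔ LinearMap.ker s) ≤ n := by
      have := Submodule.finrank_le (b.orthogonal C ⊔ LinearMap.ker s)
      rwa [hN] at this
    have h3 : k ≤ n := by omega
    rw [horth] at h1
    rw [hW]
    omega
  have hCW : C ≤ W := by
    intro x hx
    rw [hW, Submodule.mem_inf]
    constructor
    · rw [LinearMap.BilinForm.mem_orthogonal_iff]
      intro y hy
      exact hso y hy x hx
    · rw [LinearMap.mem_ker]
      have h0 : (s x) ^ 2 = 0 := by rw [← hself]; exact hso x hx x hx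
      exact pow_eq_zero_iff (by norm_num) |>.mp h0
  -- pick v ∈ W \ C
  have hlt : C < W := lt_of_le_of_ne hCW (by
    intro h
    rw [← h, hdim] at hWrank
    omega)
  obtain ⟨v, hvW, hvC⟩ := SetLike.exists_of_lt hlt
  have hv0 : v ≠ 0 := fun h => hvC (h ▸ C.zero_mem)
  refine ⟨C ⊔ F ∙ v, le_sup_left, ?_, ?_⟩
  · have hinf : C ⊓ (F ∙ v) = ⊥ :=
      ((Submodule.disjoint_span_singleton' hv0).mpr hvC).eq_bot
    have := Submodule.finrank_sup_add_finrank_inf_eq C (F ∙ v)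
    rw [hinf, finrank_bot, finrank_span_singleton hv0, hdim] at this
    omega
  · -- orthogonality of the extended code
    have hvorth : ∀ c ∈ C, b c v = 0 := by
      intro c hc
      exact (LinearMap.BilinForm.mem_orthogonal_iff.mp hvW.1) c hc
    have hvv : b v v = 0 := by
      rw [hself]
      have : s v = 0 := LinearMap.mem_ker.mp hvW.2
      rw [this]; ring
    intro x hx y hy
    rw [Submodule.mem_sup] at hx hy
    obtain ⟨c, hc, av, hav, rfl⟩ := hx
    obtain ⟨d, hd, bv, hbv, rfl⟩ := hy
    rw [Submodule.mem_span_singleton] at hav hbv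
    obtain ⟨a, rfl⟩ := hav
    obtain ⟨e, rfl⟩ := hbv
    have key : b (c + a • v) (d + e • v) = 0 := by
      simp only [map_add, LinearMap.add_apply, map_smul, LinearMap.smul_apply, smul_eq_mul]
      rw [hbapp c d, hso c hc d hd, hvorth c hc, hbsymm, hvorth d hd, hvv]
      ring
    rw [hbapp] at key
    exact key
end

section
/- Let q be an odd prime power and let C be an [n,k] Euclidean self-orthogonal code over F_q with n even and n ≥ 2k+2. Then C is contained in a Euclidean self-orthogonal code of dimension n/2 - 1. -/
open LinearMap (BilinForm)

noncomputable def myB (F : Type) [Field F] (n : ℕ) : BilinForm F (Fin n → F) :=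
  LinearMap.mk₂ F (fun x y => ∑ i, x i * y i)
    (fun x x' y => by simp [add_mul, Finset.sum_add_distrib])
    (fun a x y => by simp [Finset.mul_sum, mul_assoc])
    (fun x y y' => by simp [mul_add, Finset.sum_add_distrib])
    (fun a x y => by simp only [Pi.smul_apply, smul_eq_mul, Finset.mul_sum]; exact Finset.sum_congr rfl fun i _ => by ring)

lemma myB_apply (F : Type) [Field F] (n : ℕ) (x y : Fin n → F) :
    myB F n x y = ∑ i, x i * y i := rfl

lemma myB_symm (F : Type) [Field F] (n : ℕ) (x y : Fin n → F) :
    myB F n x y = myB F n y x := by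
  simp [myB_apply, mul_comm]

lemma myB_refl (F : Type) [Field F] (n : ℕ) : (myB F n).IsRefl := by
  intro x y h; rw [myB_symm]; exact h

lemma myB_nondeg (F : Type) [Field F] (n : ℕ) : (myB F n).Nondegenerate := by
  refine ⟨?_, ?_⟩
  · intro x hx
    funext i
    have := hx (Pi.single i 1)
    simpa [myB_apply, Pi.single_apply, mul_comm] using this
  · intro x hx
    funext i
    have := hx (Pi.single i 1)
    simpa [myB_apply, Pi.single_apply, mul_comm] using this

set_option synthInstance.maxHeartbeats 1000000 in
set_option maxHeartbeats 1000000 in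
open Module in
lemma step (F : Type) [Field F] [Fintype F] (n k : ℕ)
    (hk : n ≥ 2 * k + 3)
    (C : Submodule F (Fin n → F)) (hdim : Module.finrank F C = k)
    (hso : ∀ x ∈ C, ∀ y ∈ C, ∑ i, x i * y i = 0) :
    ∃ C' : Submodule F (Fin n → F), C ≤ C' ∧ Module.finrank F C' = k + 1 ∧
      ∀ x ∈ C', ∀ y ∈ C', ∑ i, x i * y i = 0 := by
  classical
  set B := myB F n with hB
  have hVfin : Module.finrank F (Fin n → F) = n := by simp
  set W := B.orthogonal C with hW
  have hCW : C ≤ W := by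
    intro x hx
    rw [LinearMap.BilinForm.mem_orthogonal_iff]
    intro y hy
    exact hso y hy x hx
  have hWrank : Module.finrank F W = n - k := by
    rw [hW, LinearMap.BilinForm.finrank_orthogonal (myB_nondeg F n), hVfin, hdim]
  set C2 : Submodule F W := C.comap W.subtype with hC2
  have hC2rank : Module.finrank F C2 = k := by
    rw [← hdim]; exact (Submodule.comapSubtypeEquivOfLe hCW).finrank_eq
  obtain ⟨U, hU⟩ := Submodule.exists_isCompl C2
  set d := Module.finrank F U with hd
  have hdrank : d = n - 2 * k := by
    have h1 := Submodule.finrank_add_eq_of_isCompl hU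
    rw [hC2rank, hWrank] at h1
    omega
  have hd3 : 3 ≤ d := by omega
  haveI : FiniteDimensional F W := FiniteDimensional.finiteDimensional_submodule W
  haveI : FiniteDimensional F U := FiniteDimensional.finiteDimensional_submodule U
  haveI : Module.Free F U := Module.Free.of_divisionRing F U
  -- the vectors of a basis of U, as elements of Fin n → F
  set b := Module.finBasis F U with hb
  set g : Fin d → (Fin n → F) := fun i => ((b i : W) : Fin n → F) with hg
  -- the quadratic polynomial
  set f : MvPolynomial (Fin d) F :=
    ∑ t : Fin n, (∑ i : Fin d, MvPolynomial.C (g i t) * MvPolynomial.X i) ^ 2 with hf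
  have hdeg : f.totalDegree < Fintype.card (Fin d) := by
    have h2 : f.totalDegree ≤ 2 := by
      apply (MvPolynomial.totalDegree_finset_sum _ _).trans
      apply Finset.sup_le
      intro t _
      apply (MvPolynomial.totalDegree_pow _ _).trans
      have : (∑ i : Fin d, MvPolynomial.C (g i t) * MvPolynomial.X i).totalDegree ≤ 1 := by
        apply (MvPolynomial.totalDegree_finset_sum _ _).trans
        apply Finset.sup_le
        intro i _
        apply (MvPolynomial.totalDegree_mul _ _).trans
        simp [MvPolynomial.totalDegree_X]
      omega
    rw [Fintype.card_fin]
    omega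
  -- Chevalley-Warning
  set p := ringChar F with hp
  haveI : CharP F p := ringChar.charP F
  have hpprime : p.Prime := CharP.char_is_prime F p
  have hdvd : p ∣ Fintype.card { x : Fin d → F // MvPolynomial.eval x f = 0 } :=
    char_dvd_card_solutions p hdeg
  have h0 : MvPolynomial.eval (0 : Fin d → F) f = 0 := by
    simp [hf]
  have hcard : 1 < Fintype.card { x : Fin d → F // MvPolynomial.eval x f = 0 } := by
    have hpos : 0 < Fintype.card { x : Fin d → F // MvPolynomial.eval x f = 0 } :=
      Fintype.card_pos_iff.mpr ⟨⟨0, h0⟩⟩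
    have h2p := hpprime.two_le
    have := Nat.le_of_dvd hpos hdvd
    omega
  obtain ⟨x, hx⟩ := Fintype.exists_ne_of_one_lt_card hcard ⟨0, h0⟩
  have hxne : x.1 ≠ 0 := by
    intro h
    apply hx
    exact Subtype.ext h
  -- the isotropic vector
  set u : U := ∑ i, x.1 i • b i with hu
  set v : Fin n → F := ((u : W) : Fin n → F) with hv
  have hveq : v = ∑ i, x.1 i • g i := by
    simp [hv, hu, hg, Submodule.coe_sum, Submodule.coe_smul]
  have hQv : ∑ t, v t * v t = 0 := by
    have := x.2
    simp only [hf] at this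
    simp only [map_sum, map_pow, map_mul, MvPolynomial.eval_C, MvPolynomial.eval_X] at this
    calc ∑ t, v t * v t = ∑ t, (∑ i, x.1 i * g i t) ^ 2 := by
          apply Finset.sum_congr rfl
          intro t _
          rw [hveq]
          simp [sq, Finset.sum_apply]
      _ = ∑ t, (∑ i, g i t * x.1 i) ^ 2 := by
          apply Finset.sum_congr rfl
          intro t _
          congr 1
          exact Finset.sum_congr rfl fun i _ => mul_comm _ _
      _ = 0 := this
  have hvW : v ∈ W := by simp [hv]
  have hvne : v ≠ 0 := by
    intro h
    have huz : u = 0 := by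
      apply Subtype.ext
      apply Subtype.ext
      exact h
    apply hxne
    have hrepr : b.repr u = x.1 := by
      rw [hu, b.repr_sum_self]
    rw [huz] at hrepr
    simp only [map_zero] at hrepr
    funext i
    have := congrArg (fun c => c i) hrepr
    simpa using this.symm
  have hvC : v ∉ C := by
    intro h
    have hmem : (u : W) ∈ C2 := by
      rw [hC2, Submodule.mem_comap]
      exact h
    have hmem3 : (u : W) ∈ C2 ⊓ U := ⟨hmem, u.2⟩
    rw [hU.inf_eq_bot, Submodule.mem_bot] at hmem3
    apply hvne
    rw [hv, hmem3]
    rfl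
  -- v is orthogonal to C
  have hvorth : ∀ c ∈ C, ∑ i, c i * v i = 0 := by
    intro c hc
    have := (LinearMap.BilinForm.mem_orthogonal_iff.mp hvW) c hc
    exact this
  -- build the extended code
  refine ⟨C ⊔ Submodule.span F {v}, le_sup_left, ?_, ?_⟩
  · have hinf : C ⊓ Submodule.span F {v} = ⊥ := by
      rw [eq_bot_iff]
      intro z hz
      rw [Submodule.mem_inf] at hz
      obtain ⟨hz1, hz2⟩ := hz
      rw [Submodule.mem_span_singleton] at hz2
      obtain ⟨a, rfl⟩ := hz2
      rcases eq_or_ne a 0 with rfl | ha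
      · simp
      · exfalso
        apply hvC
        have : v = a⁻¹ • (a • v) := by rw [smul_smul, inv_mul_cancel₀ ha, one_smul]
        rw [this]
        exact C.smul_mem _ hz1
    have := Submodule.finrank_sup_add_finrank_inf_eq C (Submodule.span F {v})
    rw [hinf, finrank_bot, add_zero, hdim, finrank_span_singleton hvne] at this
    exact this
  · intro z hz w hw
    rw [Submodule.mem_sup] at hz hw
    obtain ⟨c, hc, s, hs, rfl⟩ := hz
    obtain ⟨c', hc', s', hs', rfl⟩ := hw
    rw [Submodule.mem_span_singleton] at hs hs'
    obtain ⟨a, rfl⟩ := hs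
    obtain ⟨a', rfl⟩ := hs'
    have key : ∀ i, (c + a • v) i * (c' + a' • v) i =
        c i * c' i + a' * (c i * v i) + a * (v i * c' i) + (a * a') * (v i * v i) := by
      intro i
      simp [Pi.add_apply, Pi.smul_apply, smul_eq_mul]
      ring
    calc ∑ i, (c + a • v) i * (c' + a' • v) i
        = ∑ i, (c i * c' i + a' * (c i * v i) + a * (v i * c' i) + (a * a') * (v i * v i)) :=
          Finset.sum_congr rfl fun i _ => key i
      _ = (∑ i, c i * c' i) + a' * (∑ i, c i * v i) + a * (∑ i, v i * c' i)
            + (a * a') * (∑ i, v i * v i) := by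
          simp [Finset.sum_add_distrib, Finset.mul_sum]
      _ = 0 := by
          rw [hso c hc c' hc', hvorth c hc, hQv]
          have h1 : ∑ i, v i * c' i = 0 := by
            rw [← hvorth c' hc']
            exact Finset.sum_congr rfl fun i _ => mul_comm _ _
          rw [h1]
          ring

lemma extend (F : Type) [Field F] [Fintype F] (n : ℕ) (hn : Even n) :
    ∀ d k (C : Submodule F (Fin n → F)), Module.finrank F C = k →
    k + d = n / 2 - 1 → n ≥ 2 * k + 2 →
    (∀ x ∈ C, ∀ y ∈ C, ∑ i, x i * y i = 0) →
    ∃ D : Submodule F (Fin n → F), C ≤ D ∧ Module.finrank F D = n / 2 - 1 ∧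
      ∀ x ∈ D, ∀ y ∈ D, ∑ i, x i * y i = 0 := by
  obtain ⟨m, hm⟩ := hn
  intro d
  induction d with
  | zero =>
    intro k C hdim hkd _ hso
    exact ⟨C, le_refl C, by omega, hso⟩
  | succ d ih =>
    intro k C hdim hkd hnk hso
    have hstep : n ≥ 2 * k + 3 := by omega
    obtain ⟨C', hCC', hdim', hso'⟩ := step F n k hstep C hdim hso
    obtain ⟨D, hD1, hD2, hD3⟩ := ih (k + 1) C' hdim' (by omega) (by omega) hso'
    exact ⟨D, le_trans hCC' hD1, hD2, hD3⟩

/-- over F_q with q odd, an [n,k] Euclidean self-orthogonal code with n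
even and n ≥ 2k+2 is contained in a Euclidean self-orthogonal code of dimension
n/2 - 1. -/
theorem stmt12 (F : Type) [Field F] [Fintype F] (hq : Odd (Fintype.card F))
    (n k : ℕ) (hn : Even n) (hnk : n ≥ 2 * k + 2)
    (C : Submodule F (Fin n → F)) (hdim : Module.finrank F C = k)
    (hso : ∀ x ∈ C, ∀ y ∈ C, ∑ i, x i * y i = 0) :
    ∃ D : Submodule F (Fin n → F), C ≤ D ∧ Module.finrank F D = n / 2 - 1 ∧
      ∀ x ∈ D, ∀ y ∈ D, ∑ i, x i * y i = 0 := by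
  obtain ⟨m, hm⟩ := hn
  exact extend F n ⟨m, hm⟩ (n / 2 - 1 - k) k C hdim (by omega) hnk hso
end
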